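/- arXiv:0912.2442 — 8 statements merged into one kernel-verified Lean document; each statement's English description precedes it below -/
import Mathlib

section
/- (Jarník) Let Θ be an n×1 real matrix (column) with entries θ₁, …, θ_n, with ψ_Θ(t) > 0 for all t > 0, and suppose there exist indices i ≠ j such that 1, θ_i, θ_j are linearly independent over ℚ. If α(Θ) < 1, then β(Θ) ≥ α(Θ)² / (1 − α(Θ)). -/
open Filter
open scoped ENNReal

/-- Distance from a real number to the nearest integer. -/
noncomputable def nid (x : ℝ) : ℝ := |x - round x|

/-- Sup-norm height `M(x) = max_i |x_i|` of an integer vector. -/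
def heightM {m : ℕ} (x : Fin m → ℤ) : ℕ := Finset.univ.sup fun i => (x i).natAbs

/-- `ψ_Θ(t) = min { max_j ‖L_j(x)‖ : x ∈ ℤ^m, 0 < M(x) ≤ t }`, valued in `ℝ≥0∞`
(the infimum over the empty family is `⊤`). -/
noncomputable def psiFn {n m : ℕ} (Θ : Matrix (Fin n) (Fin m) ℝ) (t : ℝ) : ℝ≥0∞ :=
  ⨅ (x : Fin m → ℤ) (_ : x ≠ 0) (_ : (heightM x : ℝ) ≤ t),
    ENNReal.ofReal (⨆ j : Fin n, nid (∑ i, Θ j i * (x i : ℝ)))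

/-- The set `{γ > 0 : limsup_{t→∞} t^γ ψ_Θ(t) < ∞}`. -/
noncomputable def uniformExps {n m : ℕ} (Θ : Matrix (Fin n) (Fin m) ℝ) : Set ℝ :=
  {γ : ℝ | 0 < γ ∧ limsup (fun t : ℝ => ENNReal.ofReal (t ^ γ) * psiFn Θ t) atTop < ⊤}

/-- The set `{γ > 0 : liminf_{t→∞} t^γ ψ_Θ(t) < ∞}`. -/
noncomputable def individualExps {n m : ℕ} (Θ : Matrix (Fin n) (Fin m) ℝ) : Set ℝ :=
  {γ : ℝ | 0 < γ ∧ liminf (fun t : ℝ => ENNReal.ofReal (t ^ γ) * psiFn Θ t) atTop < ⊤}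

/-- The uniform Diophantine exponent `α(Θ)`, valued in `ℝ≥0∞`. -/
noncomputable def alphaExp {n m : ℕ} (Θ : Matrix (Fin n) (Fin m) ℝ) : ℝ≥0∞ :=
  sSup (ENNReal.ofReal '' uniformExps Θ)

/-- The individual Diophantine exponent `β(Θ)`, valued in `ℝ≥0∞`. -/
noncomputable def betaExp {n m : ℕ} (Θ : Matrix (Fin n) (Fin m) ℝ) : ℝ≥0∞ :=
  sSup (ENNReal.ofReal '' individualExps Θ)

namespace JarnikAux

lemma nid_nonneg (x : ℝ) : 0 ≤ nid x := abs_nonneg _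

lemma nid_neg (x : ℝ) : nid (-x) = nid x := by
  unfold nid
  rw [abs_sub_round_eq_min, abs_sub_round_eq_min]
  rcases eq_or_ne (Int.fract x) 0 with h | h
  · rw [Int.fract_neg_eq_zero.mpr h, h]
  · rw [Int.fract_neg h, min_comm]
    ring_nf

lemma round_err (x : ℝ) : |((round x : ℤ) : ℝ) - x| = nid x := by
  rw [abs_sub_comm]; rfl

section Theta
variable {n : ℕ} (Θ : Matrix (Fin n) (Fin 1) ℝ)

noncomputable def rfun (N : ℕ) : ℝ := ⨆ s : Fin n, nid (Θ s 0 * N)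

lemma nid_le_rfun (s : Fin n) (N : ℕ) : nid (Θ s 0 * N) ≤ rfun Θ N := by
  unfold rfun
  exact le_ciSup (Set.Finite.bddAbove (Set.finite_range fun s : Fin n => nid (Θ s 0 * N))) s

lemma rfun_nonneg (s : Fin n) (N : ℕ) : 0 ≤ rfun Θ N :=
  (nid_nonneg _).trans (nid_le_rfun Θ s N)

lemma heightM_one (x : Fin 1 → ℤ) : heightM x = (x 0).natAbs := by
  unfold heightM
  refine le_antisymm (Finset.sup_le fun i _ => ?_)
    (Finset.le_sup (f := fun i => (x i).natAbs) (Finset.mem_univ 0))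
  rw [Subsingleton.elim i 0]

lemma sup_eq_rfun (x : Fin 1 → ℤ) :
    (⨆ s : Fin n, nid (∑ i, Θ s i * (x i : ℝ))) = rfun Θ (x 0).natAbs := by
  unfold rfun
  refine iSup_congr fun s => ?_
  have h0 : (∑ i, Θ s i * (x i : ℝ)) = Θ s 0 * (x 0 : ℝ) := by
    rw [Fin.sum_univ_one]
  rw [h0]
  set N := (x 0).natAbs with hN
  rcases Int.natAbs_eq (x 0) with h | h
  · rw [h, ← hN, Int.cast_natCast]
  · rw [h, ← hN, Int.cast_neg, Int.cast_natCast, mul_neg, nid_neg]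

lemma psiFn_le_rfun (t : ℝ) (q : ℕ) (hq : 1 ≤ q) (hqt : (q : ℝ) ≤ t) :
    psiFn Θ t ≤ ENNReal.ofReal (rfun Θ q) := by
  have hx : (fun _ : Fin 1 => (q : ℤ)) ≠ 0 := by
    intro h
    have h0 := congrFun h 0
    simp only [Pi.zero_apply, Int.natCast_eq_zero] at h0
    omega
  have hh : ((heightM (fun _ : Fin 1 => (q : ℤ)) : ℕ) : ℝ) ≤ t := by
    rw [heightM_one]
    simpa using hqt
  calc psiFn Θ t ≤ ⨅ (_ : (fun _ : Fin 1 => (q : ℤ)) ≠ 0)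
        (_ : ((heightM (fun _ : Fin 1 => (q : ℤ)) : ℕ) : ℝ) ≤ t),
        ENNReal.ofReal (⨆ s : Fin n, nid (∑ i, Θ s i * (((fun _ : Fin 1 => (q : ℤ)) i : ℤ) : ℝ))) :=
          iInf_le _ _
    _ ≤ _ := by
        refine le_trans (iInf_le _ hx) (le_trans (iInf_le _ hh) (le_of_eq ?_))
        rw [sup_eq_rfun]
        simp

lemma le_psiFn (t c : ℝ) (hc : ∀ q : ℕ, 1 ≤ q → (q : ℝ) ≤ t → c ≤ rfun Θ q) :
    ENNReal.ofReal c ≤ psiFn Θ t := by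
  refine le_iInf fun x => le_iInf fun hx => le_iInf fun hxt => ?_
  rw [sup_eq_rfun]
  refine ENNReal.ofReal_le_ofReal (hc _ ?_ ?_)
  · refine Int.natAbs_pos.mpr fun h0 => hx (funext fun i => ?_)
    rw [Subsingleton.elim i 0]; exact h0
  · rw [heightM_one] at hxt; exact hxt

end Theta

/-! ### Records -/

section Records
variable (r : ℕ → ℝ)

open Classical in
noncomputable def nxt (q : ℕ) : ℕ :=
  if h : ∃ m, q < m ∧ r m < r q then Nat.find h else q + 1

noncomputable def Qseq : ℕ → ℕ := fun k => (nxt r)^[k] 1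

lemma nxt_gt (q : ℕ) : q < nxt r q := by
  unfold nxt; classical
  split_ifs with h
  · exact (Nat.find_spec h).1
  · omega

lemma Qseq_zero : Qseq r 0 = 1 := rfl

lemma Qseq_succ (k : ℕ) : Qseq r (k + 1) = nxt r (Qseq r k) :=
  Function.iterate_succ_apply' _ _ _

lemma Qseq_lt_succ (k : ℕ) : Qseq r k < Qseq r (k + 1) := by
  rw [Qseq_succ]; exact nxt_gt r _

lemma Qseq_strictMono : StrictMono (Qseq r) :=
  strictMono_nat_of_lt_succ (Qseq_lt_succ r)

lemma Qseq_one_le (k : ℕ) : 1 ≤ Qseq r k := by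
  induction k with
  | zero => simp [Qseq_zero]
  | succ k ih => exact ih.trans (Qseq_lt_succ r k).le

lemma Qseq_ge (k : ℕ) : k + 1 ≤ Qseq r k := by
  induction k with
  | zero => simp [Qseq_zero]
  | succ k ih => have := Qseq_lt_succ r k; omega

variable (hex : ∀ q, 1 ≤ q → ∃ m, q < m ∧ r m < r q)

include hex

lemma nxt_lt (q : ℕ) (hq : 1 ≤ q) : r (nxt r q) < r q := by
  unfold nxt; classical
  rw [dif_pos (hex q hq)]
  exact (Nat.find_spec (hex q hq)).2

lemma nxt_min (q : ℕ) (hq : 1 ≤ q) (m : ℕ) (h1 : q < m) (h2 : m < nxt r q) : ¬ r m < r q := by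
  unfold nxt at h2; classical
  rw [dif_pos (hex q hq)] at h2
  intro hcon
  exact Nat.find_min (hex q hq) h2 ⟨h1, hcon⟩

lemma zeta_strict (k : ℕ) : r (Qseq r (k + 1)) < r (Qseq r k) := by
  rw [Qseq_succ]; exact nxt_lt r hex _ (Qseq_one_le r k)

lemma zeta_anti {k l : ℕ} (h : k ≤ l) : r (Qseq r l) ≤ r (Qseq r k) := by
  induction l with
  | zero => simp_all
  | succ l ih =>
    rcases Nat.lt_or_ge k (l + 1) with h' | h'
    · exact (zeta_strict r hex l).le.trans (ih (by omega))
    · have : k = l + 1 := le_antisymm h h'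
      rw [this]

lemma rec_min (k : ℕ) : ∀ q, 1 ≤ q → q < Qseq r (k + 1) → r (Qseq r k) ≤ r q := by
  induction k with
  | zero =>
    intro q hq1 hq2
    rcases eq_or_lt_of_le hq1 with h | h
    · rw [show Qseq r 0 = 1 from rfl, ← h]
    · rw [Qseq_succ] at hq2
      exact not_lt.mp (nxt_min r hex 1 le_rfl q h hq2)
  | succ k ih =>
    intro q hq1 hq2
    rcases Nat.lt_or_ge q (Qseq r (k + 1)) with h | h
    · exact (zeta_strict r hex k).le.trans (ih q hq1 h)
    · rcases eq_or_lt_of_le h with h' | h'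
      · rw [← h']
      · rw [Qseq_succ] at hq2
        exact not_lt.mp (nxt_min r hex _ (Qseq_one_le r _) q h' hq2)

lemma zeta_small (hsm : ∀ ε, 0 < ε → ∃ q, 1 ≤ q ∧ r q < ε) (ε : ℝ) (hε : 0 < ε) :
    ∃ K, ∀ k, K ≤ k → r (Qseq r k) < ε := by
  obtain ⟨q, hq1, hqε⟩ := hsm ε hε
  refine ⟨q, fun k hk => lt_of_le_of_lt ?_ hqε⟩
  have hq : q < Qseq r (k + 1) := by
    have := Qseq_ge r (k + 1); omega
  exact rec_min r hex _ q hq1 hq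

end Records
end JarnikAux

namespace JarnikAux2

def dot3 {R : Type*} [CommRing R] (u v : Fin 3 → R) : R :=
  u 0 * v 0 + u 1 * v 1 + u 2 * v 2

def cross3 {R : Type*} [CommRing R] (u v : Fin 3 → R) : Fin 3 → R :=
  ![u 1 * v 2 - u 2 * v 1, u 2 * v 0 - u 0 * v 2, u 0 * v 1 - u 1 * v 0]

lemma cross3_apply0 {R : Type*} [CommRing R] (u v : Fin 3 → R) :
    cross3 u v 0 = u 1 * v 2 - u 2 * v 1 := rfl
lemma cross3_apply1 {R : Type*} [CommRing R] (u v : Fin 3 → R) :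
    cross3 u v 1 = u 2 * v 0 - u 0 * v 2 := rfl
lemma cross3_apply2 {R : Type*} [CommRing R] (u v : Fin 3 → R) :
    cross3 u v 2 = u 0 * v 1 - u 1 * v 0 := rfl

lemma fin3_ext {R : Type*} {u v : Fin 3 → R}
    (h0 : u 0 = v 0) (h1 : u 1 = v 1) (h2 : u 2 = v 2) : u = v := by
  funext i
  fin_cases i <;> assumption

lemma cross3_self {R : Type*} [CommRing R] (u : Fin 3 → R) : cross3 u u = 0 := by
  refine fin3_ext ?_ ?_ ?_ <;>
    simp [cross3_apply0, cross3_apply1, cross3_apply2, mul_comm]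

lemma cross3_smul (a : Fin 3 → ℝ) (t : ℝ) (b : Fin 3 → ℝ) :
    cross3 a (t • b) = t • cross3 a b := by
  refine fin3_ext ?_ ?_ ?_ <;>
    simp only [cross3_apply0, cross3_apply1, cross3_apply2, Pi.smul_apply, smul_eq_mul] <;> ring

lemma dot3_smul (a : Fin 3 → ℝ) (t : ℝ) (b : Fin 3 → ℝ) :
    dot3 a (t • b) = t * dot3 a b := by
  simp only [dot3, Pi.smul_apply, smul_eq_mul]; ring

lemma dot3_smul_left (a : Fin 3 → ℝ) (t : ℝ) (b : Fin 3 → ℝ) :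
    dot3 (t • a) b = t * dot3 a b := by
  simp only [dot3, Pi.smul_apply, smul_eq_mul]; ring

lemma dot3_cross3_left {R : Type*} [CommRing R] (a b : Fin 3 → R) :
    dot3 a (cross3 a b) = 0 := by
  simp only [dot3, cross3_apply0, cross3_apply1, cross3_apply2]; ring

lemma dot3_cross3_right {R : Type*} [CommRing R] (a b : Fin 3 → R) :
    dot3 b (cross3 a b) = 0 := by
  simp only [dot3, cross3_apply0, cross3_apply1, cross3_apply2]; ring

lemma cross3_cross3 (a b u : Fin 3 → ℝ) :
    cross3 (cross3 a b) u = dot3 a u • b - dot3 b u • a := by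
  refine fin3_ext ?_ ?_ ?_ <;>
    simp only [cross3_apply0, cross3_apply1, cross3_apply2, dot3, Pi.smul_apply, Pi.sub_apply,
      smul_eq_mul] <;> ring

lemma exists_smul_of_cross3_eq_zero {v w : Fin 3 → ℝ} (hv : v ≠ 0) (h : cross3 v w = 0) :
    ∃ t : ℝ, w = t • v := by
  have c0 : v 1 * w 2 - v 2 * w 1 = 0 := by
    have := congrFun h 0; simpa [cross3_apply0] using this
  have c1 : v 2 * w 0 - v 0 * w 2 = 0 := by
    have := congrFun h 1; simpa [cross3_apply1] using this
  have c2 : v 0 * w 1 - v 1 * w 0 = 0 := by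
    have := congrFun h 2; simpa [cross3_apply2] using this
  have hvi : v 0 ≠ 0 ∨ v 1 ≠ 0 ∨ v 2 ≠ 0 := by
    by_contra hc
    push_neg at hc
    exact hv (fin3_ext hc.1 hc.2.1 hc.2.2)
  rcases hvi with h0 | h1 | h2
  · refine ⟨w 0 / v 0, fin3_ext ?_ ?_ ?_⟩ <;> rw [Pi.smul_apply, smul_eq_mul]
    · rw [div_mul_cancel₀ _ h0]
    · rw [div_mul_eq_mul_div, eq_div_iff h0]; linear_combination c2
    · rw [div_mul_eq_mul_div, eq_div_iff h0]; linear_combination -c1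
  · refine ⟨w 1 / v 1, fin3_ext ?_ ?_ ?_⟩ <;> rw [Pi.smul_apply, smul_eq_mul]
    · rw [div_mul_eq_mul_div, eq_div_iff h1]; linear_combination -c2
    · rw [div_mul_cancel₀ _ h1]
    · rw [div_mul_eq_mul_div, eq_div_iff h1]; linear_combination c0
  · refine ⟨w 2 / v 2, fin3_ext ?_ ?_ ?_⟩ <;> rw [Pi.smul_apply, smul_eq_mul]
    · rw [div_mul_eq_mul_div, eq_div_iff h2]; linear_combination c1
    · rw [div_mul_eq_mul_div, eq_div_iff h2]; linear_combination -c0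
    · rw [div_mul_cancel₀ _ h2]

def zcast (v : Fin 3 → ℤ) : Fin 3 → ℝ := fun s => (v s : ℝ)

lemma zcast_cross3 (u v : Fin 3 → ℤ) : zcast (cross3 u v) = cross3 (zcast u) (zcast v) := by
  refine fin3_ext ?_ ?_ ?_ <;>
    simp only [zcast, cross3_apply0, cross3_apply1, cross3_apply2] <;> push_cast <;> ring

lemma zcast_dot3 (u v : Fin 3 → ℤ) : ((dot3 u v : ℤ) : ℝ) = dot3 (zcast u) (zcast v) := by
  simp only [zcast, dot3]; push_cast; ring

lemma int_combo_ne {θ1 θ2 : ℝ} (h : LinearIndependent ℚ ![(1 : ℝ), θ1, θ2]) (a b c : ℤ)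
    (hne : ¬(a = 0 ∧ b = 0 ∧ c = 0)) : (a : ℝ) + (b : ℝ) * θ1 + (c : ℝ) * θ2 ≠ 0 := by
  intro heq
  rw [Fintype.linearIndependent_iff] at h
  have h3 := h ![(a : ℚ), (b : ℚ), (c : ℚ)] ?_
  · refine hne ⟨?_, ?_, ?_⟩
    · have := h3 0; simpa using this
    · have := h3 1; simpa using this
    · have := h3 2; simpa using this
  · rw [Fin.sum_univ_three]
    simp only [Matrix.cons_val_zero, Matrix.cons_val_one, Matrix.head_cons,
      Matrix.cons_val_two, Matrix.tail_cons, Rat.smul_def]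
    push_cast
    linarith [heq]

end JarnikAux2

namespace JarnikAux3
open JarnikAux JarnikAux2

variable (θ1 θ2 : ℝ) (Q : ℕ → ℕ)

noncomputable def zv (k : ℕ) : Fin 3 → ℤ :=
  ![(Q k : ℤ), round (θ1 * (Q k : ℝ)), round (θ2 * (Q k : ℝ))]

lemma zv0 (k : ℕ) : zv θ1 θ2 Q k 0 = (Q k : ℤ) := rfl
lemma zv1 (k : ℕ) : zv θ1 θ2 Q k 1 = round (θ1 * (Q k : ℝ)) := rfl
lemma zv2 (k : ℕ) : zv θ1 θ2 Q k 2 = round (θ2 * (Q k : ℝ)) := rfl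

noncomputable def Er1 (k : ℕ) : ℝ := ((zv θ1 θ2 Q k 1 : ℤ) : ℝ) - θ1 * (Q k : ℝ)
noncomputable def Er2 (k : ℕ) : ℝ := ((zv θ1 θ2 Q k 2 : ℤ) : ℝ) - θ2 * (Q k : ℝ)

lemma Er1_abs (k : ℕ) : |Er1 θ1 θ2 Q k| = nid (θ1 * (Q k : ℝ)) := by
  rw [Er1, zv1]; exact round_err _

lemma Er2_abs (k : ℕ) : |Er2 θ1 θ2 Q k| = nid (θ2 * (Q k : ℝ)) := by
  rw [Er2, zv2]; exact round_err _

lemma zv_cast_ne (hQ1 : ∀ k, 1 ≤ Q k) (k : ℕ) : zcast (zv θ1 θ2 Q k) ≠ 0 := by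
  intro hc
  have h0 := congrFun hc 0
  simp only [zcast, zv0, Pi.zero_apply, Int.cast_natCast, Nat.cast_eq_zero] at h0
  have := hQ1 k
  omega

lemma det_expand (a b c : ℕ) :
    dot3 (zcast (zv θ1 θ2 Q c)) (cross3 (zcast (zv θ1 θ2 Q a)) (zcast (zv θ1 θ2 Q b))) =
      (Q a : ℝ) * (Er1 θ1 θ2 Q b * Er2 θ1 θ2 Q c)
      - (Q a : ℝ) * (Er2 θ1 θ2 Q b * Er1 θ1 θ2 Q c)
      - Er1 θ1 θ2 Q a * ((Q b : ℝ) * Er2 θ1 θ2 Q c)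
      + Er1 θ1 θ2 Q a * (Er2 θ1 θ2 Q b * (Q c : ℝ))
      + Er2 θ1 θ2 Q a * ((Q b : ℝ) * Er1 θ1 θ2 Q c)
      - Er2 θ1 θ2 Q a * (Er1 θ1 θ2 Q b * (Q c : ℝ)) := by
  simp only [dot3, cross3_apply0, cross3_apply1, cross3_apply2, zcast, Er1, Er2, zv0, zv1, zv2]
  push_cast
  ring

lemma scale_pack (hQ1 : ∀ k, 1 ≤ Q k) (hQm : Monotone Q) {a b : ℕ} (hab : a ≤ b)
    (hcr : cross3 (zv θ1 θ2 Q a) (zv θ1 θ2 Q b) = 0) :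
    ∃ t : ℝ, 1 ≤ t ∧ (Q b : ℝ) = t * (Q a : ℝ) ∧
      zcast (zv θ1 θ2 Q b) = t • zcast (zv θ1 θ2 Q a) ∧
      Er1 θ1 θ2 Q b = t * Er1 θ1 θ2 Q a ∧ Er2 θ1 θ2 Q b = t * Er2 θ1 θ2 Q a := by
  have hcrR : cross3 (zcast (zv θ1 θ2 Q a)) (zcast (zv θ1 θ2 Q b)) = 0 := by
    rw [← zcast_cross3, hcr]
    funext i'; simp [zcast]
  obtain ⟨t, ht⟩ := exists_smul_of_cross3_eq_zero (zv_cast_ne θ1 θ2 Q hQ1 a) hcrR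
  have h0 := congrFun ht 0
  have h1 := congrFun ht 1
  have h2 := congrFun ht 2
  simp only [Pi.smul_apply, smul_eq_mul, zcast] at h0 h1 h2
  rw [zv0, zv0] at h0
  rw [Int.cast_natCast, Int.cast_natCast] at h0
  have hQa : (1 : ℝ) ≤ (Q a : ℝ) := by exact_mod_cast hQ1 a
  have hQab : (Q a : ℝ) ≤ (Q b : ℝ) := by exact_mod_cast hQm hab
  have ht1 : 1 ≤ t := by nlinarith
  refine ⟨t, ht1, h0, ht, ?_, ?_⟩
  · rw [Er1, Er1]; linear_combination h1 - θ1 * h0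
  · rw [Er2, Er2]; linear_combination h2 - θ2 * h0

lemma abs_six (a b c d e f : ℝ) : |a - b - c + d + e - f| ≤ |a| + |b| + |c| + |d| + |e| + |f| := by
  have l1 := le_abs_self a; have m1 := neg_abs_le a
  have l2 := le_abs_self b; have m2 := neg_abs_le b
  have l3 := le_abs_self c; have m3 := neg_abs_le c
  have l4 := le_abs_self d; have m4 := neg_abs_le d
  have l5 := le_abs_self e; have m5 := neg_abs_le e
  have l6 := le_abs_self f; have m6 := neg_abs_le f
  refine abs_le.mpr ⟨by linarith, by linarith⟩

lemma abs_mul3_le {x y z X Y Z : ℝ} (hx : |x| ≤ X) (hy : |y| ≤ Y) (hz : |z| ≤ Z) :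
    |x * (y * z)| ≤ X * (Y * Z) := by
  rw [abs_mul, abs_mul]
  have hY0 : 0 ≤ Y := (abs_nonneg _).trans hy
  have hZ0 : 0 ≤ Z := (abs_nonneg _).trans hz
  have hX0 : 0 ≤ X := (abs_nonneg _).trans hx
  exact mul_le_mul hx (mul_le_mul hy hz (abs_nonneg _) hY0) (by positivity) hX0

lemma bnd1 {q A a b η : ℝ} (h1 : q ≤ A) (h2 : b ≤ a) (hb : 0 ≤ b) (hη : 0 ≤ η) (hq : 0 ≤ q) :
    q * (η * b) ≤ A * (a * η) := by
  have hA : 0 ≤ A := hq.trans h1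
  calc q * (η * b) ≤ A * (η * b) := mul_le_mul_of_nonneg_right h1 (by positivity)
    _ ≤ A * (η * a) := mul_le_mul_of_nonneg_left (mul_le_mul_of_nonneg_left h2 hη) hA
    _ = A * (a * η) := by ring

lemma bnd2 {B A a b η : ℝ} (hBA : B ≤ A) (hE : η * B = b) (ha : 0 ≤ a) (hη : 0 ≤ η)
    (hB : 0 ≤ B) : a * b ≤ A * (a * η) := by
  calc a * b = (a * η) * B := by rw [← hE]; ring
    _ ≤ (a * η) * A := mul_le_mul_of_nonneg_left hBA (by positivity)
    _ = A * (a * η) := by ring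

end JarnikAux3


namespace JarnikMain
open JarnikAux JarnikAux2 JarnikAux3

set_option maxHeartbeats 2000000 in
lemma main_step {n : ℕ} (Θ : Matrix (Fin n) (Fin 1) ℝ)
    (hpos : ∀ t : ℝ, 0 < t → 0 < psiFn Θ t)
    (i j : Fin n) (hLI : LinearIndependent ℚ ![(1 : ℝ), Θ i 0, Θ j 0])
    (γ : ℝ) (hγmem : γ ∈ uniformExps Θ) (hγ1 : γ < 1) :
    γ ^ 2 / (1 - γ) ∈ individualExps Θ := by
  classical
  obtain ⟨hγ0, hlim⟩ := hγmem
  have h1γ : (0 : ℝ) < 1 - γ := by linarith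
  -- Step A : uniform upper bound for psiFn
  set CE : ℝ≥0∞ := limsup (fun t : ℝ => ENNReal.ofReal (t ^ γ) * psiFn Θ t) atTop + 1 with hCEdef
  have hCEne : CE ≠ ⊤ := by
    rw [hCEdef]
    exact ENNReal.add_ne_top.mpr ⟨hlim.ne, ENNReal.one_ne_top⟩
  have hev : ∀ᶠ t : ℝ in atTop, ENNReal.ofReal (t ^ γ) * psiFn Θ t < CE :=
    eventually_lt_of_limsup_lt (ENNReal.lt_add_right hlim.ne one_ne_zero)
  obtain ⟨T₀', hT₀'⟩ := eventually_atTop.mp hev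
  set T₀ : ℝ := max T₀' 1 with hT₀def
  have hT₀1 : (1 : ℝ) ≤ T₀ := le_max_right _ _
  set C₁ : ℝ := max CE.toReal 1 with hC₁def
  have hC₁1 : (1 : ℝ) ≤ C₁ := le_max_right _ _
  have hupper : ∀ t : ℝ, T₀ ≤ t → psiFn Θ t ≤ ENNReal.ofReal (C₁ * t ^ (-γ)) := by
    intro t ht
    have ht1 : (1 : ℝ) ≤ t := le_trans hT₀1 ht
    have ht0 : (0 : ℝ) < t := lt_of_lt_of_le one_pos ht1
    have hpow : (0 : ℝ) < t ^ γ := Real.rpow_pos_of_pos ht0 _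
    have h1 : ENNReal.ofReal (t ^ γ) * psiFn Θ t ≤ CE :=
      (hT₀' t (le_trans (le_max_left _ _) ht)).le
    have h2 : psiFn Θ t ≤ CE / ENNReal.ofReal (t ^ γ) := by
      rw [ENNReal.le_div_iff_mul_le (Or.inl (by simp [ENNReal.ofReal_pos.mpr hpow, ne_of_gt]))
        (Or.inl ENNReal.ofReal_ne_top)]
      rw [mul_comm]; exact h1
    refine h2.trans ?_
    have he : ENNReal.ofReal (C₁ * t ^ (-γ)) = ENNReal.ofReal C₁ * (ENNReal.ofReal (t ^ γ))⁻¹ := by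
      rw [ENNReal.ofReal_mul (by linarith), Real.rpow_neg ht0.le,
        ENNReal.ofReal_inv_of_pos hpow]
    rw [he, div_eq_mul_inv]
    refine mul_le_mul_left ?_ _
    calc CE = ENNReal.ofReal CE.toReal := (ENNReal.ofReal_toReal hCEne).symm
      _ ≤ ENNReal.ofReal C₁ := ENNReal.ofReal_le_ofReal (le_max_left _ _)
  -- Step B : smallness of rfun
  have hsm : ∀ ε : ℝ, 0 < ε → ∃ q : ℕ, 1 ≤ q ∧ rfun Θ q < ε := by
    intro ε hε
    set t : ℝ := max T₀ ((C₁ / ε) ^ (1 / γ)) + 1 with htdef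
    have hta : T₀ ≤ t := by
      rw [htdef]
      have := le_max_left T₀ ((C₁ / ε) ^ (1 / γ)); linarith
    have htb : (C₁ / ε) ^ (1 / γ) < t := by
      rw [htdef]
      have := le_max_right T₀ ((C₁ / ε) ^ (1 / γ)); linarith
    have ht0 : (0 : ℝ) < t := by linarith
    have hbase : (0 : ℝ) ≤ C₁ / ε := by positivity
    have hgt : C₁ / ε < t ^ γ := by
      calc C₁ / ε = ((C₁ / ε) ^ (1 / γ)) ^ γ := by
            rw [one_div, Real.rpow_inv_rpow hbase (ne_of_gt hγ0)]
        _ < t ^ γ := Real.rpow_lt_rpow (Real.rpow_nonneg hbase _) htb hγ0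
    have hsmall : C₁ * t ^ (-γ) < ε := by
      have hp : (0 : ℝ) < t ^ γ := Real.rpow_pos_of_pos ht0 _
      have h' : C₁ < t ^ γ * ε := (div_lt_iff₀ hε).mp hgt
      rw [Real.rpow_neg ht0.le, ← div_eq_mul_inv, div_lt_iff₀ hp]
      linarith
    have hψ : psiFn Θ t < ENNReal.ofReal ε :=
      lt_of_le_of_lt (hupper t hta) ((ENNReal.ofReal_lt_ofReal_iff hε).mpr hsmall)
    rw [psiFn] at hψ
    rw [iInf_lt_iff] at hψ
    obtain ⟨x, hx⟩ := hψ
    rw [iInf_lt_iff] at hx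
    obtain ⟨hxne, hx⟩ := hx
    rw [iInf_lt_iff] at hx
    obtain ⟨hxt, hx⟩ := hx
    rw [sup_eq_rfun] at hx
    refine ⟨(x 0).natAbs, ?_, (ENNReal.ofReal_lt_ofReal_iff hε).mp hx⟩
    refine Int.natAbs_pos.mpr fun h0 => hxne (funext fun i' => ?_)
    rw [Subsingleton.elim i' 0]; exact h0
  -- Step C : records
  have hrpos : ∀ q : ℕ, 1 ≤ q → 0 < rfun Θ q := by
    intro q hq
    have h1 := psiFn_le_rfun Θ (q : ℝ) q hq le_rfl
    have h2 : (0 : ℝ) < (q : ℝ) := by exact_mod_cast hq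
    exact ENNReal.ofReal_pos.mp (lt_of_lt_of_le (hpos _ h2) h1)
  have hex : ∀ q, 1 ≤ q → ∃ m, q < m ∧ rfun Θ m < rfun Θ q := by
    intro q hq
    have hne : (Finset.Icc 1 q).Nonempty := ⟨1, by simp [hq]⟩
    have hF0 : 0 < (Finset.Icc 1 q).inf' hne (rfun Θ) := by
      rw [Finset.lt_inf'_iff]
      intro i' hi'
      exact hrpos i' (Finset.mem_Icc.mp hi').1
    obtain ⟨m, hm1, hmF⟩ := hsm _ hF0
    have hqm : q < m := by
      by_contra hc
      push_neg at hc
      have : (Finset.Icc 1 q).inf' hne (rfun Θ) ≤ rfun Θ m :=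
        Finset.inf'_le _ (Finset.mem_Icc.mpr ⟨hm1, hc⟩)
      linarith
    exact ⟨m, hqm, lt_of_lt_of_le hmF (Finset.inf'_le _ (Finset.mem_Icc.mpr ⟨hq, le_rfl⟩))⟩
  set Q : ℕ → ℕ := Qseq (rfun Θ) with hQdef
  have hQmono : StrictMono Q := Qseq_strictMono _
  have hQ1 : ∀ k, 1 ≤ Q k := Qseq_one_le _
  have hQge : ∀ k, k + 1 ≤ Q k := Qseq_ge _
  have hζanti : ∀ {k l : ℕ}, k ≤ l → rfun Θ (Q l) ≤ rfun Θ (Q k) :=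
    fun {k l} h => zeta_anti _ hex h
  have hζpos : ∀ k, 0 < rfun Θ (Q k) := fun k => hrpos _ (hQ1 k)
  have hζ0 : ∀ ε : ℝ, 0 < ε → ∃ K, ∀ k, K ≤ k → rfun Θ (Q k) < ε :=
    fun ε hε => zeta_small _ hex hsm ε hε
  have hQcast1 : ∀ k, (1 : ℝ) ≤ (Q k : ℝ) := fun k => by exact_mod_cast hQ1 k
  -- Step D : uniform bound along the records
  set C₂ : ℝ := C₁ * 2 ^ γ with hC₂def
  have h2γ1 : (1 : ℝ) ≤ 2 ^ γ := by
    calc (1 : ℝ) = (2 : ℝ) ^ (0 : ℝ) := (Real.rpow_zero 2).symm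
      _ ≤ 2 ^ γ := Real.rpow_le_rpow_of_exponent_le one_le_two hγ0.le
  have hC₂1 : (1 : ℝ) ≤ C₂ := by nlinarith
  have hUζ : ∀ k : ℕ, T₀ + 1 ≤ (Q (k + 1) : ℝ) → rfun Θ (Q k) ≤ C₂ * (Q (k + 1) : ℝ) ^ (-γ) := by
    intro k hk
    have hQr2 : (2 : ℝ) ≤ (Q (k + 1) : ℝ) := by linarith
    have ht0 : (0 : ℝ) < (Q (k + 1) : ℝ) - 1 := by linarith
    have hta : T₀ ≤ (Q (k + 1) : ℝ) - 1 := by linarith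
    have hlow : ENNReal.ofReal (rfun Θ (Q k)) ≤ psiFn Θ ((Q (k + 1) : ℝ) - 1) := by
      refine le_psiFn Θ _ _ fun q hq1 hqt => ?_
      have hqlt : q < Q (k + 1) := by
        have h' : (q : ℝ) < (Q (k + 1) : ℝ) := by linarith
        exact_mod_cast h'
      exact rec_min _ hex k q hq1 hqlt
    have h1 : rfun Θ (Q k) ≤ C₁ * ((Q (k + 1) : ℝ) - 1) ^ (-γ) := by
      have h' := hlow.trans (hupper _ hta)
      exact (ENNReal.ofReal_le_ofReal_iff (by positivity)).mp h'
    have h2 : ((Q (k + 1) : ℝ) - 1) ^ (-γ) ≤ 2 ^ γ * (Q (k + 1) : ℝ) ^ (-γ) := by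
      have hhalf : (Q (k + 1) : ℝ) / 2 ≤ (Q (k + 1) : ℝ) - 1 := by linarith
      have hhpos : (0 : ℝ) < (Q (k + 1) : ℝ) / 2 := by linarith
      have hmono : ((Q (k + 1) : ℝ) - 1) ^ (-γ) ≤ ((Q (k + 1) : ℝ) / 2) ^ (-γ) := by
        rw [Real.rpow_neg ht0.le, Real.rpow_neg hhpos.le]
        exact inv_anti₀ (Real.rpow_pos_of_pos hhpos _)
          (Real.rpow_le_rpow hhpos.le hhalf hγ0.le)
      refine hmono.trans (le_of_eq ?_)
      rw [Real.div_rpow (by linarith) (by norm_num : (0:ℝ) ≤ 2),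
        Real.rpow_neg (by linarith : (0:ℝ) ≤ (Q (k+1) : ℝ)),
        Real.rpow_neg (by norm_num : (0:ℝ) ≤ (2:ℝ))]
      have h2p : (0:ℝ) < (2:ℝ) ^ γ := Real.rpow_pos_of_pos (by norm_num) _
      have hQp : (0:ℝ) < ((Q (k+1) : ℝ)) ^ γ := Real.rpow_pos_of_pos (by linarith) _
      field_simp
    calc rfun Θ (Q k) ≤ C₁ * ((Q (k + 1) : ℝ) - 1) ^ (-γ) := h1
      _ ≤ C₁ * (2 ^ γ * (Q (k + 1) : ℝ) ^ (-γ)) :=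
          mul_le_mul_of_nonneg_left h2 (by linarith)
      _ = C₂ * (Q (k + 1) : ℝ) ^ (-γ) := by rw [hC₂def]; ring
  -- constants
  have hδ0 : 0 < γ ^ 2 / (1 - γ) := div_pos (pow_pos hγ0 2) h1γ
  set c₅ : ℝ := (6 * C₂ ^ 2) ^ ((1 : ℝ) / (1 - γ)) with hc₅def
  have hc₅0 : 0 < c₅ := Real.rpow_pos_of_pos (by positivity) _
  set Cfin : ℝ := c₅ ^ γ * C₂ with hCfindef
  refine ⟨hδ0, lt_of_le_of_lt (liminf_le_of_frequently_le' ?_)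
    (ENNReal.ofReal_lt_top (r := Cfin))⟩
  rw [frequently_atTop]
  intro T
  -- choice of K
  set K : ℕ := ⌈max (T₀ + 1) T⌉₊ with hKdef
  have hKb : max (T₀ + 1) T ≤ (Q K : ℝ) := by
    have h1 : K ≤ Q K := by have := hQge K; omega
    calc max (T₀ + 1) T ≤ (K : ℝ) := Nat.le_ceil _
      _ ≤ (Q K : ℝ) := by exact_mod_cast h1
  have hKT₀ : T₀ + 1 ≤ (Q K : ℝ) := le_trans (le_max_left _ _) hKb
  have hKT : T ≤ (Q K : ℝ) := le_trans (le_max_right _ _) hKb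
  -- abbreviations (kept as full terms)
  have hE1 : ∀ k, |Er1 (Θ i 0) (Θ j 0) Q k| ≤ rfun Θ (Q k) := by
    intro k
    rw [Er1_abs]
    exact nid_le_rfun Θ i (Q k)
  have hE2 : ∀ k, |Er2 (Θ i 0) (Θ j 0) Q k| ≤ rfun Θ (Q k) := by
    intro k
    rw [Er2_abs]
    exact nid_le_rfun Θ j (Q k)
  have hscale : ∀ a b : ℕ, a ≤ b → cross3 (zv (Θ i 0) (Θ j 0) Q a) (zv (Θ i 0) (Θ j 0) Q b) = 0 →
      ∃ t : ℝ, 1 ≤ t ∧ (Q b : ℝ) = t * (Q a : ℝ) ∧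
        zcast (zv (Θ i 0) (Θ j 0) Q b) = t • zcast (zv (Θ i 0) (Θ j 0) Q a) ∧
        Er1 (Θ i 0) (Θ j 0) Q b = t * Er1 (Θ i 0) (Θ j 0) Q a ∧
        Er2 (Θ i 0) (Θ j 0) Q b = t * Er2 (Θ i 0) (Θ j 0) Q a :=
    fun a b hab hcr => scale_pack _ _ Q hQ1 hQmono.monotone hab hcr
  -- ν exists
  have hν_ex : ∃ m, K ≤ m ∧ cross3 (zv (Θ i 0) (Θ j 0) Q K) (zv (Θ i 0) (Θ j 0) Q (m + 1)) ≠ 0 := by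
    by_contra hcon
    push_neg at hcon
    have hE1K : Er1 (Θ i 0) (Θ j 0) Q K = 0 := by
      by_contra hne
      have hpos' : 0 < |Er1 (Θ i 0) (Θ j 0) Q K| := abs_pos.mpr hne
      obtain ⟨K', hK'⟩ := hζ0 _ hpos'
      obtain ⟨t, ht1, hQt, _, hE1t, _⟩ :=
        hscale K (max K K' + 1) (by omega) (hcon (max K K') (le_max_left _ _))
      have habs : |Er1 (Θ i 0) (Θ j 0) Q K| ≤ |Er1 (Θ i 0) (Θ j 0) Q (max K K' + 1)| := by
        rw [hE1t, abs_mul, abs_of_nonneg (by linarith : (0:ℝ) ≤ t)]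
        nlinarith [abs_nonneg (Er1 (Θ i 0) (Θ j 0) Q K)]
      have h3 := hK' (max K K' + 1) (by omega)
      have h4 := hE1 (max K K' + 1)
      linarith
    have hne : ¬((-(zv (Θ i 0) (Θ j 0) Q K 1)) = 0 ∧ (Q K : ℤ) = 0 ∧ (0 : ℤ) = 0) := by
      rintro ⟨-, hb, -⟩
      have h5 : Q K = 0 := by exact_mod_cast hb
      have := hQ1 K; omega
    refine int_combo_ne hLI (-(zv (Θ i 0) (Θ j 0) Q K 1)) (Q K : ℤ) 0 hne ?_
    rw [Er1] at hE1K
    push_cast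
    linarith
  -- ν with minimality
  obtain ⟨ν, hKν, hνcr, hνmin⟩ :
      ∃ ν, K ≤ ν ∧ cross3 (zv (Θ i 0) (Θ j 0) Q K) (zv (Θ i 0) (Θ j 0) Q (ν + 1)) ≠ 0 ∧
        ∀ m, K ≤ m → m < ν →
          cross3 (zv (Θ i 0) (Θ j 0) Q K) (zv (Θ i 0) (Θ j 0) Q (m + 1)) = 0 :=
    ⟨Nat.find hν_ex, (Nat.find_spec hν_ex).1, (Nat.find_spec hν_ex).2,
      fun m h1 h2 => by by_contra hc; exact Nat.find_min hν_ex h2 ⟨h1, hc⟩⟩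
  have hcrK : ∀ k, K ≤ k → k ≤ ν →
      cross3 (zv (Θ i 0) (Θ j 0) Q K) (zv (Θ i 0) (Θ j 0) Q k) = 0 := by
    intro k h1 h2
    rcases eq_or_lt_of_le h1 with h | h
    · rw [← h]; exact cross3_self _
    · have hk : k - 1 + 1 = k := by omega
      rw [← hk]
      exact hνmin (k - 1) (by omega) (by omega)
  -- μ exists
  have hμ_ex : ∃ m, ν + 1 ≤ m ∧
      dot3 (zv (Θ i 0) (Θ j 0) Q (m + 1))
        (cross3 (zv (Θ i 0) (Θ j 0) Q K) (zv (Θ i 0) (Θ j 0) Q (ν + 1))) ≠ 0 := by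
    by_contra hcon
    push_neg at hcon
    have hall : ∀ k, K ≤ k → dot3 (zcast (zv (Θ i 0) (Θ j 0) Q k))
        (zcast (cross3 (zv (Θ i 0) (Θ j 0) Q K) (zv (Θ i 0) (Θ j 0) Q (ν + 1)))) = 0 := by
      intro k hk
      rcases le_or_gt k ν with h | h
      · obtain ⟨t, _, _, hsm', _, _⟩ := hscale K k hk (hcrK k hk h)
        rw [hsm', dot3_smul_left, zcast_cross3, dot3_cross3_left, mul_zero]
      · rcases eq_or_lt_of_le (by omega : ν + 1 ≤ k) with h' | h'
        · rw [← h', zcast_cross3]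
          exact dot3_cross3_right _ _
        · have hk1 : k - 1 + 1 = k := by omega
          have hz := hcon (k - 1) (by omega)
          rw [hk1] at hz
          rw [← zcast_dot3, hz, Int.cast_zero]
    set u : Fin 3 → ℤ :=
      cross3 (zv (Θ i 0) (Θ j 0) Q K) (zv (Θ i 0) (Θ j 0) Q (ν + 1)) with hudef
    have hueb : ∀ k, K ≤ k →
        |(u 0 : ℝ) + (u 1 : ℝ) * Θ i 0 + (u 2 : ℝ) * Θ j 0| ≤
          (|(u 1 : ℝ)| + |(u 2 : ℝ)|) * rfun Θ (Q k) := by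
      intro k hk
      have hd := hall k hk
      have hda : dot3 (zcast (zv (Θ i 0) (Θ j 0) Q k)) (zcast u) =
          (Q k : ℝ) * (u 0 : ℝ) + ((zv (Θ i 0) (Θ j 0) Q k 1 : ℤ) : ℝ) * (u 1 : ℝ)
            + ((zv (Θ i 0) (Θ j 0) Q k 2 : ℤ) : ℝ) * (u 2 : ℝ) := by
        simp only [dot3, zcast, zv0]
        push_cast
        ring
      rw [hda] at hd
      have hkey : (Q k : ℝ) * ((u 0 : ℝ) + (u 1 : ℝ) * Θ i 0 + (u 2 : ℝ) * Θ j 0) =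
          -((u 1 : ℝ) * Er1 (Θ i 0) (Θ j 0) Q k + (u 2 : ℝ) * Er2 (Θ i 0) (Θ j 0) Q k) := by
        rw [Er1, Er2]
        linear_combination hd
      have hk1 := hQcast1 k
      have habs1 := hE1 k
      have habs2 := hE2 k
      have ha1 := abs_nonneg (Er1 (Θ i 0) (Θ j 0) Q k)
      have ha2 := abs_nonneg (Er2 (Θ i 0) (Θ j 0) Q k)
      have hu1 := abs_nonneg ((u 1 : ℝ))
      have hu2 := abs_nonneg ((u 2 : ℝ))
      calc |(u 0 : ℝ) + (u 1 : ℝ) * Θ i 0 + (u 2 : ℝ) * Θ j 0|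
          ≤ (Q k : ℝ) * |(u 0 : ℝ) + (u 1 : ℝ) * Θ i 0 + (u 2 : ℝ) * Θ j 0| := by
            nlinarith [abs_nonneg ((u 0 : ℝ) + (u 1 : ℝ) * Θ i 0 + (u 2 : ℝ) * Θ j 0)]
        _ = |(Q k : ℝ) * ((u 0 : ℝ) + (u 1 : ℝ) * Θ i 0 + (u 2 : ℝ) * Θ j 0)| := by
            rw [abs_mul, abs_of_nonneg (by linarith : (0:ℝ) ≤ (Q k : ℝ))]
        _ = |(u 1 : ℝ) * Er1 (Θ i 0) (Θ j 0) Q k + (u 2 : ℝ) * Er2 (Θ i 0) (Θ j 0) Q k| := by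
            rw [hkey, abs_neg]
        _ ≤ |(u 1 : ℝ)| * |Er1 (Θ i 0) (Θ j 0) Q k| + |(u 2 : ℝ)| * |Er2 (Θ i 0) (Θ j 0) Q k| := by
            refine (abs_add_le _ _).trans ?_
            rw [abs_mul, abs_mul]
        _ ≤ (|(u 1 : ℝ)| + |(u 2 : ℝ)|) * rfun Θ (Q k) := by nlinarith [hζpos k]
    have hue0 : (u 0 : ℝ) + (u 1 : ℝ) * Θ i 0 + (u 2 : ℝ) * Θ j 0 = 0 := by
      by_contra hne
      have hpos' : 0 < |(u 0 : ℝ) + (u 1 : ℝ) * Θ i 0 + (u 2 : ℝ) * Θ j 0| := abs_pos.mpr hne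
      have hcu : (0:ℝ) < |(u 1 : ℝ)| + |(u 2 : ℝ)| + 1 := by positivity
      obtain ⟨K', hK'⟩ := hζ0 (|(u 0 : ℝ) + (u 1 : ℝ) * Θ i 0 + (u 2 : ℝ) * Θ j 0| /
        (|(u 1 : ℝ)| + |(u 2 : ℝ)| + 1)) (div_pos hpos' hcu)
      have h1 := hueb (max K K') (le_max_left _ _)
      have h2 := hK' (max K K') (le_max_right _ _)
      have h3 := hζpos (max K K')
      have h4 := (lt_div_iff₀ hcu).mp h2
      nlinarith [abs_nonneg ((u 1 : ℝ)), abs_nonneg ((u 2 : ℝ))]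
    have hcomp : u 0 = 0 ∧ u 1 = 0 ∧ u 2 = 0 := by
      by_contra hc
      exact int_combo_ne hLI (u 0) (u 1) (u 2) hc (by push_cast; linarith [hue0])
    exact hνcr (fin3_ext (by simp [hcomp.1]) (by simp [hcomp.2.1]) (by simp [hcomp.2.2]))
  -- μ with minimality
  obtain ⟨μ, hνμ, hμdot, hμmin⟩ :
      ∃ μ, ν + 1 ≤ μ ∧
        dot3 (zv (Θ i 0) (Θ j 0) Q (μ + 1))
          (cross3 (zv (Θ i 0) (Θ j 0) Q K) (zv (Θ i 0) (Θ j 0) Q (ν + 1))) ≠ 0 ∧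
        ∀ m, ν + 1 ≤ m → m < μ →
          dot3 (zv (Θ i 0) (Θ j 0) Q (m + 1))
            (cross3 (zv (Θ i 0) (Θ j 0) Q K) (zv (Θ i 0) (Θ j 0) Q (ν + 1))) = 0 :=
    ⟨Nat.find hμ_ex, (Nat.find_spec hμ_ex).1, (Nat.find_spec hμ_ex).2,
      fun m h1 h2 => by by_contra hc; exact Nat.find_min hμ_ex h2 ⟨h1, hc⟩⟩
  have hKμ : K ≤ μ := by omega
  have hudot : ∀ k, K ≤ k → k ≤ μ →
      dot3 (zcast (zv (Θ i 0) (Θ j 0) Q k))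
        (zcast (cross3 (zv (Θ i 0) (Θ j 0) Q K) (zv (Θ i 0) (Θ j 0) Q (ν + 1)))) = 0 := by
    intro k hk hkμ
    rcases le_or_gt k ν with h | h
    · obtain ⟨t, _, _, hsm', _, _⟩ := hscale K k hk (hcrK k hk h)
      rw [hsm', dot3_smul_left, zcast_cross3, dot3_cross3_left, mul_zero]
    · rcases eq_or_lt_of_le (by omega : ν + 1 ≤ k) with h' | h'
      · rw [← h', zcast_cross3]
        exact dot3_cross3_right _ _
      · have hk1 : k - 1 + 1 = k := by omega
        have hz := hμmin (k - 1) (by omega) (by omega)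
        rw [hk1] at hz
        rw [← zcast_dot3, hz, Int.cast_zero]
  -- jj : last index ≤ μ not parallel to z μ
  have hj_ex : ∃ k0, k0 ≤ μ ∧ (K ≤ k0 ∧
      cross3 (zv (Θ i 0) (Θ j 0) Q k0) (zv (Θ i 0) (Θ j 0) Q μ) ≠ 0) := by
    by_contra hcon
    push_neg at hcon
    have hcK : cross3 (zv (Θ i 0) (Θ j 0) Q K) (zv (Θ i 0) (Θ j 0) Q μ) = 0 :=
      hcon K hKμ (by omega)
    have hcν : cross3 (zv (Θ i 0) (Θ j 0) Q (ν + 1)) (zv (Θ i 0) (Θ j 0) Q μ) = 0 :=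
      hcon (ν + 1) (by omega) (by omega)
    have hcKR : cross3 (zcast (zv (Θ i 0) (Θ j 0) Q K))
        (zcast (zv (Θ i 0) (Θ j 0) Q μ)) = 0 := by
      rw [← zcast_cross3, hcK]; funext i'; simp [zcast]
    have hcνR : cross3 (zcast (zv (Θ i 0) (Θ j 0) Q (ν + 1)))
        (zcast (zv (Θ i 0) (Θ j 0) Q μ)) = 0 := by
      rw [← zcast_cross3, hcν]; funext i'; simp [zcast]
    obtain ⟨t, htK⟩ := exists_smul_of_cross3_eq_zero (zv_cast_ne _ _ Q hQ1 K) hcKR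
    obtain ⟨s, htν⟩ := exists_smul_of_cross3_eq_zero (zv_cast_ne _ _ Q hQ1 (ν + 1)) hcνR
    have hs0 : s ≠ 0 := by
      intro h
      rw [h, zero_smul] at htν
      exact zv_cast_ne _ _ Q hQ1 μ htν
    have hzν : zcast (zv (Θ i 0) (Θ j 0) Q (ν + 1)) =
        (s⁻¹ * t) • zcast (zv (Θ i 0) (Θ j 0) Q K) := by
      rw [← smul_smul, ← htK, htν, inv_smul_smul₀ hs0]
    have hcr0 : cross3 (zcast (zv (Θ i 0) (Θ j 0) Q K))
        (zcast (zv (Θ i 0) (Θ j 0) Q (ν + 1))) = 0 := by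
      rw [hzν, cross3_smul, cross3_self, smul_zero]
    refine hνcr ?_
    have h' : zcast (cross3 (zv (Θ i 0) (Θ j 0) Q K) (zv (Θ i 0) (Θ j 0) Q (ν + 1))) = 0 := by
      rw [zcast_cross3]; exact hcr0
    funext i'
    have := congrFun h' i'
    simpa [zcast] using this
  obtain ⟨jj, hjle, hjK, hjcr, hjmax⟩ :
      ∃ jj, jj ≤ μ ∧ K ≤ jj ∧
        cross3 (zv (Θ i 0) (Θ j 0) Q jj) (zv (Θ i 0) (Θ j 0) Q μ) ≠ 0 ∧
        ∀ k, jj < k → k ≤ μ →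
          cross3 (zv (Θ i 0) (Θ j 0) Q k) (zv (Θ i 0) (Θ j 0) Q μ) = 0 := by
    obtain ⟨k0, hk0μ, hk0P⟩ := hj_ex
    have hspec := Nat.findGreatest_spec (P := fun k0 => K ≤ k0 ∧
        cross3 (zv (Θ i 0) (Θ j 0) Q k0) (zv (Θ i 0) (Θ j 0) Q μ) ≠ 0) hk0μ hk0P
    refine ⟨Nat.findGreatest (fun k0 => K ≤ k0 ∧
        cross3 (zv (Θ i 0) (Θ j 0) Q k0) (zv (Θ i 0) (Θ j 0) Q μ) ≠ 0) μ,
      Nat.findGreatest_le _, hspec.1, hspec.2, ?_⟩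
    intro k hk1 hk2
    by_contra hc
    exact Nat.findGreatest_is_greatest (P := fun k0 => K ≤ k0 ∧
        cross3 (zv (Θ i 0) (Θ j 0) Q k0) (zv (Θ i 0) (Θ j 0) Q μ) ≠ 0) hk1 hk2
      ⟨le_trans hspec.1 hk1.le, hc⟩
  have hjlt : jj < μ := by
    rcases eq_or_lt_of_le hjle with h | h
    · exfalso
      rw [h] at hjcr
      exact hjcr (cross3_self _)
    · exact h
  have hj1cr : cross3 (zv (Θ i 0) (Θ j 0) Q (jj + 1)) (zv (Θ i 0) (Θ j 0) Q μ) = 0 :=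
    hjmax (jj + 1) (lt_add_one _) (by omega)
  -- scaling of the (jj+1)-st vector
  obtain ⟨τ, hτ1, hQτ, hsmulτ, hE1τ, hE2τ⟩ := hscale (jj + 1) μ (by omega) hj1cr
  -- the determinant is nonzero
  have hc3ne : cross3 (zcast (zv (Θ i 0) (Θ j 0) Q jj)) (zcast (zv (Θ i 0) (Θ j 0) Q (jj + 1))) ≠ 0 := by
    intro hc0
    have hcrjμ : cross3 (zcast (zv (Θ i 0) (Θ j 0) Q jj)) (zcast (zv (Θ i 0) (Θ j 0) Q μ)) = 0 := by
      rw [hsmulτ, cross3_smul, hc0, smul_zero]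
    refine hjcr ?_
    have h' : zcast (cross3 (zv (Θ i 0) (Θ j 0) Q jj) (zv (Θ i 0) (Θ j 0) Q μ)) = 0 := by
      rw [zcast_cross3]; exact hcrjμ
    funext i'
    have := congrFun h' i'
    simpa [zcast] using this
  have hDrne : dot3 (zcast (zv (Θ i 0) (Θ j 0) Q (μ + 1)))
      (cross3 (zcast (zv (Θ i 0) (Θ j 0) Q jj)) (zcast (zv (Θ i 0) (Θ j 0) Q (jj + 1)))) ≠ 0 := by
    intro hD0
    have hg : cross3 (cross3 (zcast (zv (Θ i 0) (Θ j 0) Q jj)) (zcast (zv (Θ i 0) (Θ j 0) Q (jj + 1))))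
        (zcast (cross3 (zv (Θ i 0) (Θ j 0) Q K) (zv (Θ i 0) (Θ j 0) Q (ν + 1)))) = 0 := by
      rw [cross3_cross3, hudot jj hjK (by omega), hudot (jj + 1) (by omega) (by omega)]
      simp
    obtain ⟨s, hs⟩ := exists_smul_of_cross3_eq_zero hc3ne hg
    have hd0 : dot3 (zcast (zv (Θ i 0) (Θ j 0) Q (μ + 1)))
        (zcast (cross3 (zv (Θ i 0) (Θ j 0) Q K) (zv (Θ i 0) (Θ j 0) Q (ν + 1)))) = 0 := by
      rw [hs, dot3_smul, hD0, mul_zero]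
    refine hμdot ?_
    have h' : ((dot3 (zv (Θ i 0) (Θ j 0) Q (μ + 1))
        (cross3 (zv (Θ i 0) (Θ j 0) Q K) (zv (Θ i 0) (Θ j 0) Q (ν + 1))) : ℤ) : ℝ) = 0 := by
      rw [zcast_dot3]; exact hd0
    exact_mod_cast h'
  have hDr1 : 1 ≤ |dot3 (zcast (zv (Θ i 0) (Θ j 0) Q (μ + 1)))
      (cross3 (zcast (zv (Θ i 0) (Θ j 0) Q jj)) (zcast (zv (Θ i 0) (Θ j 0) Q (jj + 1))))| := by
    have hze : dot3 (zcast (zv (Θ i 0) (Θ j 0) Q (μ + 1)))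
        (cross3 (zcast (zv (Θ i 0) (Θ j 0) Q jj)) (zcast (zv (Θ i 0) (Θ j 0) Q (jj + 1)))) =
        ((dot3 (zv (Θ i 0) (Θ j 0) Q (μ + 1))
          (cross3 (zv (Θ i 0) (Θ j 0) Q jj) (zv (Θ i 0) (Θ j 0) Q (jj + 1))) : ℤ) : ℝ) := by
      rw [zcast_dot3, zcast_cross3]
    have hne : dot3 (zv (Θ i 0) (Θ j 0) Q (μ + 1))
        (cross3 (zv (Θ i 0) (Θ j 0) Q jj) (zv (Θ i 0) (Θ j 0) Q (jj + 1))) ≠ 0 := by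
      intro h
      apply hDrne
      rw [hze, h, Int.cast_zero]
    rw [hze, ← Int.cast_abs]
    exact_mod_cast Int.one_le_abs hne
  -- notation for the estimates
  have hQjA : (Q jj : ℝ) ≤ (Q (μ + 1) : ℝ) := by
    exact_mod_cast hQmono.monotone (by omega : jj ≤ μ + 1)
  have hx1B : (Q (jj + 1) : ℝ) ≤ (Q μ : ℝ) := by
    exact_mod_cast hQmono.monotone (by omega : jj + 1 ≤ μ)
  have hBA : (Q μ : ℝ) ≤ (Q (μ + 1) : ℝ) := by
    exact_mod_cast hQmono.monotone (Nat.le_succ μ)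
  have hB1 : (1 : ℝ) ≤ (Q μ : ℝ) := hQcast1 μ
  have hA1 : (1 : ℝ) ≤ (Q (μ + 1) : ℝ) := hQcast1 (μ + 1)
  have hx1_1 : (1 : ℝ) ≤ (Q (jj + 1) : ℝ) := hQcast1 (jj + 1)
  have hζμpos : 0 < rfun Θ (Q μ) := hζpos μ
  have hζjpos : 0 < rfun Θ (Q jj) := hζpos jj
  have hζμj : rfun Θ (Q μ) ≤ rfun Θ (Q jj) := hζanti (by omega)
  have hτ0 : (0 : ℝ) < τ := by linarith
  have hη0 : (0 : ℝ) < (Q (jj + 1) : ℝ) * rfun Θ (Q μ) / (Q μ : ℝ) := by positivity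
  -- bound on the scaled errors
  have hE1j1 : |Er1 (Θ i 0) (Θ j 0) Q (jj + 1)| ≤ (Q (jj + 1) : ℝ) * rfun Θ (Q μ) / (Q μ : ℝ) := by
    have h1 : |Er1 (Θ i 0) (Θ j 0) Q μ| = τ * |Er1 (Θ i 0) (Θ j 0) Q (jj + 1)| := by
      rw [hE1τ, abs_mul, abs_of_nonneg hτ0.le]
    have h2 := hE1 μ
    rw [h1] at h2
    rw [le_div_iff₀ (by positivity : (0:ℝ) < (Q μ : ℝ)), hQτ]
    nlinarith [mul_le_mul_of_nonneg_right h2 (show (0:ℝ) ≤ (Q (jj + 1) : ℝ) by linarith)]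
  have hE2j1 : |Er2 (Θ i 0) (Θ j 0) Q (jj + 1)| ≤ (Q (jj + 1) : ℝ) * rfun Θ (Q μ) / (Q μ : ℝ) := by
    have h1 : |Er2 (Θ i 0) (Θ j 0) Q μ| = τ * |Er2 (Θ i 0) (Θ j 0) Q (jj + 1)| := by
      rw [hE2τ, abs_mul, abs_of_nonneg hτ0.le]
    have h2 := hE2 μ
    rw [h1] at h2
    rw [le_div_iff₀ (by positivity : (0:ℝ) < (Q μ : ℝ)), hQτ]
    nlinarith [mul_le_mul_of_nonneg_right h2 (show (0:ℝ) ≤ (Q (jj + 1) : ℝ) by linarith)]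
  -- the six monomial bounds; M := A * (ζ j * η)
  have hEμ1 : |Er1 (Θ i 0) (Θ j 0) Q (μ + 1)| ≤ rfun Θ (Q μ) :=
    (hE1 (μ + 1)).trans (hζanti (Nat.le_succ μ))
  have hEμ2 : |Er2 (Θ i 0) (Θ j 0) Q (μ + 1)| ≤ rfun Θ (Q μ) :=
    (hE2 (μ + 1)).trans (hζanti (Nat.le_succ μ))
  have hQjabs : |(Q jj : ℝ)| ≤ (Q jj : ℝ) := le_of_eq (abs_of_nonneg (by positivity))
  have hQj1abs : |(Q (jj + 1) : ℝ)| ≤ (Q (jj + 1) : ℝ) := le_of_eq (abs_of_nonneg (by positivity))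
  have hQμ1abs : |(Q (μ + 1) : ℝ)| ≤ (Q (μ + 1) : ℝ) := le_of_eq (abs_of_nonneg (by positivity))
  have hM : (0:ℝ) < (Q (μ + 1) : ℝ) * (rfun Θ (Q jj) * ((Q (jj + 1) : ℝ) * rfun Θ (Q μ) / (Q μ : ℝ))) := by
    positivity
  have hηB : ((Q (jj + 1) : ℝ) * rfun Θ (Q μ) / (Q μ : ℝ)) * (Q μ : ℝ) = (Q (jj + 1) : ℝ) * rfun Θ (Q μ) := by
    field_simp
  have hm1 : |(Q jj : ℝ) * (Er1 (Θ i 0) (Θ j 0) Q (jj + 1) * Er2 (Θ i 0) (Θ j 0) Q (μ + 1))| ≤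
      (Q (μ + 1) : ℝ) * (rfun Θ (Q jj) * ((Q (jj + 1) : ℝ) * rfun Θ (Q μ) / (Q μ : ℝ))) := by
    exact le_trans (abs_mul3_le hQjabs hE1j1 hEμ2)
      (bnd1 hQjA hζμj hζμpos.le hη0.le (by positivity))
  have hm2 : |(Q jj : ℝ) * (Er2 (Θ i 0) (Θ j 0) Q (jj + 1) * Er1 (Θ i 0) (Θ j 0) Q (μ + 1))| ≤
      (Q (μ + 1) : ℝ) * (rfun Θ (Q jj) * ((Q (jj + 1) : ℝ) * rfun Θ (Q μ) / (Q μ : ℝ))) := by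
    exact le_trans (abs_mul3_le hQjabs hE2j1 hEμ1)
      (bnd1 hQjA hζμj hζμpos.le hη0.le (by positivity))
  have hm3 : |Er1 (Θ i 0) (Θ j 0) Q jj * ((Q (jj + 1) : ℝ) * Er2 (Θ i 0) (Θ j 0) Q (μ + 1))| ≤
      (Q (μ + 1) : ℝ) * (rfun Θ (Q jj) * ((Q (jj + 1) : ℝ) * rfun Θ (Q μ) / (Q μ : ℝ))) := by
    exact le_trans (abs_mul3_le (hE1 jj) hQj1abs hEμ2)
      (bnd2 hBA hηB hζjpos.le hη0.le (by positivity))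
  have hm4 : |Er1 (Θ i 0) (Θ j 0) Q jj * (Er2 (Θ i 0) (Θ j 0) Q (jj + 1) * (Q (μ + 1) : ℝ))| ≤
      (Q (μ + 1) : ℝ) * (rfun Θ (Q jj) * ((Q (jj + 1) : ℝ) * rfun Θ (Q μ) / (Q μ : ℝ))) := by
    exact le_trans (abs_mul3_le (hE1 jj) hE2j1 hQμ1abs) (le_of_eq (by ring))
  have hm5 : |Er2 (Θ i 0) (Θ j 0) Q jj * ((Q (jj + 1) : ℝ) * Er1 (Θ i 0) (Θ j 0) Q (μ + 1))| ≤
      (Q (μ + 1) : ℝ) * (rfun Θ (Q jj) * ((Q (jj + 1) : ℝ) * rfun Θ (Q μ) / (Q μ : ℝ))) := by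
    exact le_trans (abs_mul3_le (hE2 jj) hQj1abs hEμ1)
      (bnd2 hBA hηB hζjpos.le hη0.le (by positivity))
  have hm6 : |Er2 (Θ i 0) (Θ j 0) Q jj * (Er1 (Θ i 0) (Θ j 0) Q (jj + 1) * (Q (μ + 1) : ℝ))| ≤
      (Q (μ + 1) : ℝ) * (rfun Θ (Q jj) * ((Q (jj + 1) : ℝ) * rfun Θ (Q μ) / (Q μ : ℝ))) := by
    exact le_trans (abs_mul3_le (hE2 jj) hE1j1 hQμ1abs) (le_of_eq (by ring))
  have hmain1 : (1:ℝ) ≤ 6 * ((Q (μ + 1) : ℝ) *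
      (rfun Θ (Q jj) * ((Q (jj + 1) : ℝ) * rfun Θ (Q μ) / (Q μ : ℝ)))) := by
    have hexp := det_expand (Θ i 0) (Θ j 0) Q jj (jj + 1) (μ + 1)
    have htriangle := abs_six
      ((Q jj : ℝ) * (Er1 (Θ i 0) (Θ j 0) Q (jj + 1) * Er2 (Θ i 0) (Θ j 0) Q (μ + 1)))
      ((Q jj : ℝ) * (Er2 (Θ i 0) (Θ j 0) Q (jj + 1) * Er1 (Θ i 0) (Θ j 0) Q (μ + 1)))
      (Er1 (Θ i 0) (Θ j 0) Q jj * ((Q (jj + 1) : ℝ) * Er2 (Θ i 0) (Θ j 0) Q (μ + 1)))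
      (Er1 (Θ i 0) (Θ j 0) Q jj * (Er2 (Θ i 0) (Θ j 0) Q (jj + 1) * (Q (μ + 1) : ℝ)))
      (Er2 (Θ i 0) (Θ j 0) Q jj * ((Q (jj + 1) : ℝ) * Er1 (Θ i 0) (Θ j 0) Q (μ + 1)))
      (Er2 (Θ i 0) (Θ j 0) Q jj * (Er1 (Θ i 0) (Θ j 0) Q (jj + 1) * (Q (μ + 1) : ℝ)))
    rw [← hexp] at htriangle
    have := hDr1.trans htriangle
    linarith [hm1, hm2, hm3, hm4, hm5, hm6]
  -- uniform bounds
  have hUj : rfun Θ (Q jj) ≤ C₂ * (Q (jj + 1) : ℝ) ^ (-γ) := by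
    refine hUζ jj ?_
    have h' : (Q K : ℝ) ≤ (Q (jj + 1) : ℝ) := by
      exact_mod_cast hQmono.monotone (by omega : K ≤ jj + 1)
    linarith
  have hUμ : rfun Θ (Q μ) ≤ C₂ * (Q (μ + 1) : ℝ) ^ (-γ) := by
    refine hUζ μ ?_
    have h' : (Q K : ℝ) ≤ (Q (μ + 1) : ℝ) := by
      exact_mod_cast hQmono.monotone (by omega : K ≤ μ + 1)
    linarith
  -- step 1 : B ≤ 6 A ζj x1 ζμ
  have hst1 : (Q μ : ℝ) ≤ 6 * ((Q (μ + 1) : ℝ) * (rfun Θ (Q jj) * ((Q (jj + 1) : ℝ) * rfun Θ (Q μ)))) := by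
    have h' := mul_le_mul_of_nonneg_right hmain1 (show (0:ℝ) ≤ (Q μ : ℝ) by linarith)
    have he : 6 * ((Q (μ + 1) : ℝ) * (rfun Θ (Q jj) * ((Q (jj + 1) : ℝ) * rfun Θ (Q μ) / (Q μ : ℝ)))) * (Q μ : ℝ) =
        6 * ((Q (μ + 1) : ℝ) * (rfun Θ (Q jj) * ((Q (jj + 1) : ℝ) * rfun Θ (Q μ)))) := by
      field_simp
    rw [he] at h'
    linarith
  -- step 2 : replace ζj by C₂ x1^{-γ} and x1^{1-γ} ≤ B^{1-γ}
  have hx1pos : (0:ℝ) < (Q (jj + 1) : ℝ) := by linarith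
  have hBpos : (0:ℝ) < (Q μ : ℝ) := by linarith
  have hApos : (0:ℝ) < (Q (μ + 1) : ℝ) := by linarith
  have he1 : (Q (jj + 1) : ℝ) ^ (1 - γ) = (Q (jj + 1) : ℝ) * (Q (jj + 1) : ℝ) ^ (-γ) := by
    rw [show (1 - γ) = 1 + (-γ) by ring, Real.rpow_add hx1pos, Real.rpow_one]
  have he2 : rfun Θ (Q jj) * (Q (jj + 1) : ℝ) ≤ C₂ * (Q (jj + 1) : ℝ) ^ (1 - γ) := by
    rw [he1]
    calc rfun Θ (Q jj) * (Q (jj + 1) : ℝ)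
        ≤ C₂ * (Q (jj + 1) : ℝ) ^ (-γ) * (Q (jj + 1) : ℝ) :=
          mul_le_mul_of_nonneg_right hUj hx1pos.le
      _ = C₂ * ((Q (jj + 1) : ℝ) * (Q (jj + 1) : ℝ) ^ (-γ)) := by ring
  have he3 : (Q (jj + 1) : ℝ) ^ (1 - γ) ≤ (Q μ : ℝ) ^ (1 - γ) :=
    Real.rpow_le_rpow hx1pos.le hx1B (by linarith)
  have hst2 : (Q μ : ℝ) ≤ 6 * C₂ * (Q (μ + 1) : ℝ) * ((Q μ : ℝ) ^ (1 - γ) * rfun Θ (Q μ)) := by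
    calc (Q μ : ℝ) ≤ 6 * ((Q (μ + 1) : ℝ) * (rfun Θ (Q jj) * ((Q (jj + 1) : ℝ) * rfun Θ (Q μ)))) := hst1
      _ = 6 * (Q (μ + 1) : ℝ) * ((rfun Θ (Q jj) * (Q (jj + 1) : ℝ)) * rfun Θ (Q μ)) := by ring
      _ ≤ 6 * (Q (μ + 1) : ℝ) * ((C₂ * (Q (jj + 1) : ℝ) ^ (1 - γ)) * rfun Θ (Q μ)) :=
          mul_le_mul_of_nonneg_left (mul_le_mul_of_nonneg_right he2 hζμpos.le)
            (by linarith : (0:ℝ) ≤ 6 * (Q (μ + 1) : ℝ))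
      _ ≤ 6 * (Q (μ + 1) : ℝ) * ((C₂ * (Q μ : ℝ) ^ (1 - γ)) * rfun Θ (Q μ)) :=
          mul_le_mul_of_nonneg_left (mul_le_mul_of_nonneg_right
            (mul_le_mul_of_nonneg_left he3 (by linarith : (0:ℝ) ≤ C₂)) hζμpos.le)
            (by linarith : (0:ℝ) ≤ 6 * (Q (μ + 1) : ℝ))
      _ = 6 * C₂ * (Q (μ + 1) : ℝ) * ((Q μ : ℝ) ^ (1 - γ) * rfun Θ (Q μ)) := by ring
  -- step 3 : B^γ ≤ 6 C₂ A ζμ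
  have hBsplit : (Q μ : ℝ) = (Q μ : ℝ) ^ γ * (Q μ : ℝ) ^ (1 - γ) := by
    rw [← Real.rpow_add hBpos]
    norm_num
  have hst3 : (Q μ : ℝ) ^ γ ≤ 6 * C₂ * (Q (μ + 1) : ℝ) * rfun Θ (Q μ) := by
    have hp : (0:ℝ) < (Q μ : ℝ) ^ (1 - γ) := Real.rpow_pos_of_pos hBpos _
    have h' : (Q μ : ℝ) ^ γ * (Q μ : ℝ) ^ (1 - γ) ≤
        (6 * C₂ * (Q (μ + 1) : ℝ) * rfun Θ (Q μ)) * (Q μ : ℝ) ^ (1 - γ) := by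
      calc (Q μ : ℝ) ^ γ * (Q μ : ℝ) ^ (1 - γ) = (Q μ : ℝ) := hBsplit.symm
        _ ≤ 6 * C₂ * (Q (μ + 1) : ℝ) * ((Q μ : ℝ) ^ (1 - γ) * rfun Θ (Q μ)) := hst2
        _ = (6 * C₂ * (Q (μ + 1) : ℝ) * rfun Θ (Q μ)) * (Q μ : ℝ) ^ (1 - γ) := by ring
    exact le_of_mul_le_mul_right h' hp
  -- step 4 : B^γ ≤ 6 C₂² A^{1-γ}
  have heA : (Q (μ + 1) : ℝ) ^ (1 - γ) = (Q (μ + 1) : ℝ) * (Q (μ + 1) : ℝ) ^ (-γ) := by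
    rw [show (1 - γ) = 1 + (-γ) by ring, Real.rpow_add hApos, Real.rpow_one]
  have hst4 : (Q μ : ℝ) ^ γ ≤ 6 * C₂ ^ 2 * (Q (μ + 1) : ℝ) ^ (1 - γ) := by
    calc (Q μ : ℝ) ^ γ ≤ 6 * C₂ * (Q (μ + 1) : ℝ) * rfun Θ (Q μ) := hst3
      _ ≤ 6 * C₂ * (Q (μ + 1) : ℝ) * (C₂ * (Q (μ + 1) : ℝ) ^ (-γ)) := by
          have hnn : (0:ℝ) ≤ 6 * C₂ * (Q (μ + 1) : ℝ) :=
            mul_nonneg (mul_nonneg (by norm_num) (by linarith)) (by linarith)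
          exact mul_le_mul_of_nonneg_left hUμ hnn
      _ = 6 * C₂ ^ 2 * ((Q (μ + 1) : ℝ) * (Q (μ + 1) : ℝ) ^ (-γ)) := by ring
      _ = 6 * C₂ ^ 2 * (Q (μ + 1) : ℝ) ^ (1 - γ) := by rw [← heA]
  -- step 5 : raise to 1/(1-γ)
  have hst5 : (Q μ : ℝ) ^ (γ / (1 - γ)) ≤ c₅ * (Q (μ + 1) : ℝ) := by
    have h1 : ((Q μ : ℝ) ^ γ) ^ ((1:ℝ) / (1 - γ)) ≤
        (6 * C₂ ^ 2 * (Q (μ + 1) : ℝ) ^ (1 - γ)) ^ ((1:ℝ) / (1 - γ)) :=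
      Real.rpow_le_rpow (by positivity) hst4 (by positivity)
    have h2 : ((Q μ : ℝ) ^ γ) ^ ((1:ℝ) / (1 - γ)) = (Q μ : ℝ) ^ (γ / (1 - γ)) := by
      rw [← Real.rpow_mul hBpos.le, mul_one_div]
    have h3 : (6 * C₂ ^ 2 * (Q (μ + 1) : ℝ) ^ (1 - γ)) ^ ((1:ℝ) / (1 - γ)) =
        c₅ * ((Q (μ + 1) : ℝ) ^ (1 - γ)) ^ ((1:ℝ) / (1 - γ)) := by
      rw [hc₅def, Real.mul_rpow (by positivity) (by positivity)]
    have h4 : ((Q (μ + 1) : ℝ) ^ (1 - γ)) ^ ((1:ℝ) / (1 - γ)) = (Q (μ + 1) : ℝ) := by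
      rw [← Real.rpow_mul hApos.le, show (1 - γ) * ((1:ℝ) / (1 - γ)) = 1 by field_simp,
        Real.rpow_one]
    rw [h2, h3, h4] at h1
    exact h1
  -- step 6 : B^δ ≤ c₅^γ A^γ
  have hst6 : (Q μ : ℝ) ^ (γ ^ 2 / (1 - γ)) ≤ c₅ ^ γ * (Q (μ + 1) : ℝ) ^ γ := by
    have h1 : ((Q μ : ℝ) ^ (γ / (1 - γ))) ^ γ ≤ (c₅ * (Q (μ + 1) : ℝ)) ^ γ :=
      Real.rpow_le_rpow (by positivity) hst5 hγ0.le
    have h2 : ((Q μ : ℝ) ^ (γ / (1 - γ))) ^ γ = (Q μ : ℝ) ^ (γ ^ 2 / (1 - γ)) := by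
      rw [← Real.rpow_mul hBpos.le]
      congr 1
      ring
    have h3 : (c₅ * (Q (μ + 1) : ℝ)) ^ γ = c₅ ^ γ * (Q (μ + 1) : ℝ) ^ γ :=
      Real.mul_rpow hc₅0.le (by positivity)
    rw [h2, h3] at h1
    exact h1
  -- step 7 : ζμ * B^δ ≤ Cfin
  have hcA : rfun Θ (Q μ) * (Q (μ + 1) : ℝ) ^ γ ≤ C₂ := by
    have hAγ : (0:ℝ) < (Q (μ + 1) : ℝ) ^ γ := Real.rpow_pos_of_pos hApos _
    have e1 : (Q (μ + 1) : ℝ) ^ (-γ) * (Q (μ + 1) : ℝ) ^ γ = 1 := by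
      rw [← Real.rpow_add hApos]
      norm_num
    have h2' := mul_le_mul_of_nonneg_right hUμ hAγ.le
    have h3' : C₂ * (Q (μ + 1) : ℝ) ^ (-γ) * (Q (μ + 1) : ℝ) ^ γ = C₂ := by
      rw [mul_assoc, e1, mul_one]
    linarith
  have hfin : rfun Θ (Q μ) * (Q μ : ℝ) ^ (γ ^ 2 / (1 - γ)) ≤ Cfin := by
    calc rfun Θ (Q μ) * (Q μ : ℝ) ^ (γ ^ 2 / (1 - γ))
        ≤ rfun Θ (Q μ) * (c₅ ^ γ * (Q (μ + 1) : ℝ) ^ γ) :=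
          mul_le_mul_of_nonneg_left hst6 hζμpos.le
      _ = c₅ ^ γ * (rfun Θ (Q μ) * (Q (μ + 1) : ℝ) ^ γ) := by ring
      _ ≤ c₅ ^ γ * C₂ := mul_le_mul_of_nonneg_left hcA (by positivity)
      _ = Cfin := by rw [hCfindef]
  -- conclusion : evaluate at t = Q μ
  refine ⟨(Q μ : ℝ), ?_, ?_⟩
  · refine le_trans hKT ?_
    exact_mod_cast hQmono.monotone hKμ
  · have hψB : psiFn Θ (Q μ : ℝ) ≤ ENNReal.ofReal (rfun Θ (Q μ)) :=
      psiFn_le_rfun Θ _ (Q μ) (hQ1 μ) le_rfl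
    calc ENNReal.ofReal ((Q μ : ℝ) ^ (γ ^ 2 / (1 - γ))) * psiFn Θ (Q μ : ℝ)
        ≤ ENNReal.ofReal ((Q μ : ℝ) ^ (γ ^ 2 / (1 - γ))) * ENNReal.ofReal (rfun Θ (Q μ)) :=
          mul_le_mul_right hψB _
      _ = ENNReal.ofReal ((Q μ : ℝ) ^ (γ ^ 2 / (1 - γ)) * rfun Θ (Q μ)) :=
          (ENNReal.ofReal_mul (by positivity)).symm
      _ ≤ ENNReal.ofReal Cfin := ENNReal.ofReal_le_ofReal (by rw [mul_comm]; exact hfin)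

end JarnikMain

/-- **Jarník's theorem, case (i) (`m = 1`).** For a column `Θ` of `n` real numbers with
`ψ_Θ(t) > 0` for all `t > 0`, if some two of the entries are linearly independent together
with `1` over `ℚ` and `α(Θ) < 1`, then `β(Θ) ≥ α(Θ)²/(1 − α(Θ))`. -/
theorem jarnik_m1 {n : ℕ} (Θ : Matrix (Fin n) (Fin 1) ℝ)
    (hpos : ∀ t : ℝ, 0 < t → 0 < psiFn Θ t)
    (hli : ∃ i j : Fin n, i ≠ j ∧ LinearIndependent ℚ ![(1 : ℝ), Θ i 0, Θ j 0])
    (hlt : alphaExp Θ < 1) :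
    ENNReal.ofReal ((alphaExp Θ).toReal ^ 2 / (1 - (alphaExp Θ).toReal)) ≤ betaExp Θ := by
  classical
  obtain ⟨i, j, hij, hLI⟩ := hli
  have hne : alphaExp Θ ≠ ⊤ := (hlt.trans (by norm_num : (1:ℝ≥0∞) < ⊤)).ne
  have hαr0 : 0 ≤ (alphaExp Θ).toReal := ENNReal.toReal_nonneg
  have hαr1 : (alphaExp Θ).toReal < 1 := by
    have := (ENNReal.toReal_lt_toReal hne (by norm_num : (1:ℝ≥0∞) ≠ ⊤)).mpr hlt
    simpa using this
  rcases eq_or_lt_of_le hαr0 with h0 | h0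
  · rw [← h0]
    norm_num
  -- now 0 < αr < 1
  by_contra hcon
  push_neg at hcon
  have hg0 : 0 < (alphaExp Θ).toReal ^ 2 / (1 - (alphaExp Θ).toReal) :=
    div_pos (pow_pos h0 2) (by linarith)
  obtain ⟨r, hr0, hβr, hrg⟩ := ENNReal.lt_iff_exists_real_btwn.mp hcon
  have hrlt : r < (alphaExp Θ).toReal ^ 2 / (1 - (alphaExp Θ).toReal) :=
    (ENNReal.ofReal_lt_ofReal_iff hg0).mp hrg
  -- the quadratic φ(x) = x² + r x − r is positive at αr
  have hφα : 0 < (alphaExp Θ).toReal ^ 2 + r * (alphaExp Θ).toReal - r := by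
    have h' : r * (1 - (alphaExp Θ).toReal) < (alphaExp Θ).toReal ^ 2 :=
      (lt_div_iff₀ (by linarith : (0:ℝ) < 1 - (alphaExp Θ).toReal)).mp hrlt
    nlinarith [h']
  -- choose ρ < αr with φ(ρ) > 0 and ρ > 0
  set αr := (alphaExp Θ).toReal with hαrdef
  set ε : ℝ := min (αr / 2) ((αr ^ 2 + r * αr - r) / (2 * αr + r + 1)) with hεdef
  have hden : (0:ℝ) < 2 * αr + r + 1 := by linarith
  have hε0 : 0 < ε := lt_min (by linarith) (div_pos hφα hden)
  have hε1 : ε ≤ αr / 2 := min_le_left _ _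
  have hε2 : ε ≤ (αr ^ 2 + r * αr - r) / (2 * αr + r + 1) := min_le_right _ _
  have hρ0 : 0 < αr - ε := by linarith
  have hρα : αr - ε < αr := by linarith
  have hφρ : 0 < (αr - ε) ^ 2 + r * (αr - ε) - r := by
    have h' : ε * (2 * αr + r + 1) ≤ αr ^ 2 + r * αr - r :=
      (le_div_iff₀ hden).mp hε2
    nlinarith [sq_nonneg ε, hε0]
  -- find γ ∈ uniformExps with γ > ρ
  have hαeq : alphaExp Θ = ENNReal.ofReal αr := (ENNReal.ofReal_toReal hne).symm
  have hρlt : ENNReal.ofReal (αr - ε) < alphaExp Θ := by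
    rw [hαeq]
    exact (ENNReal.ofReal_lt_ofReal_iff h0).mpr hρα
  obtain ⟨b, hbmem, hbgt⟩ := lt_sSup_iff.mp hρlt
  obtain ⟨γ, hγU, rfl⟩ := hbmem
  have hγρ : αr - ε < γ := by
    by_contra hc
    push_neg at hc
    exact absurd (ENNReal.ofReal_le_ofReal hc) (not_le.mpr hbgt)
  have hγ1 : γ < 1 := by
    have hle : ENNReal.ofReal γ ≤ alphaExp Θ :=
      le_sSup (Set.mem_image_of_mem _ hγU)
    have := lt_of_le_of_lt hle hlt
    exact ENNReal.ofReal_lt_one.mp this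
  have hφγ : 0 < γ ^ 2 + r * γ - r := by
    nlinarith [hγρ, hρ0, hr0]
  have hrγ : r < γ ^ 2 / (1 - γ) := by
    rw [lt_div_iff₀ (by linarith : (0:ℝ) < 1 - γ)]
    nlinarith
  have hmem := JarnikMain.main_step Θ hpos i j hLI γ hγU hγ1
  have hβ : ENNReal.ofReal (γ ^ 2 / (1 - γ)) ≤ betaExp Θ :=
    le_sSup (Set.mem_image_of_mem _ hmem)
  have : ENNReal.ofReal r ≤ betaExp Θ :=
    le_trans (ENNReal.ofReal_le_ofReal hrγ.le) hβ
  exact absurd this (not_le.mpr hβr)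
end

section
/- The polynomial x³ − x² + 2x − 1 has exactly one real root α₀, and 1/3 < α₀ < 1. For every α with 1/3 < α < α₀ one has g₁(α) > max(1, α/(1−α)); in particular, on this interval α·g₁(α) > α²/(1−α). Moreover g₁(α) > 1 for all α with 1/3 < α < 1, and g₁(1/3) = g₁(1) = 1. -/
/-- `g₁(α) = (α(1−α) + √(α²(1−α)² + 4α(2α²−2α+1))) / (2(2α²−2α+1))`. -/
noncomputable def g1 (α : ℝ) : ℝ :=
  (α * (1 - α) + Real.sqrt (α ^ 2 * (1 - α) ^ 2 + 4 * α * (2 * α ^ 2 - 2 * α + 1))) /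
    (2 * (2 * α ^ 2 - 2 * α + 1))

private lemma fmono : StrictMono (fun x : ℝ => x ^ 3 - x ^ 2 + 2 * x - 1) := by
  intro x y hxy
  simp only
  nlinarith [sq_nonneg (x + y), sq_nonneg (x - 1), sq_nonneg (y - 1), sq_nonneg (x - y)]

private lemma qpos (α : ℝ) : 0 < 2 * α ^ 2 - 2 * α + 1 := by
  nlinarith [sq_nonneg (2 * α - 1)]

private lemma g1_gt_one {α : ℝ} (h1 : 1 / 3 < α) (h2 : α < 1) : 1 < g1 α := by
  have hq := qpos α
  rw [g1, lt_div_iff₀ (by linarith)]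
  have hsqrt : 5 * α ^ 2 - 5 * α + 2 <
      Real.sqrt (α ^ 2 * (1 - α) ^ 2 + 4 * α * (2 * α ^ 2 - 2 * α + 1)) := by
    apply Real.lt_sqrt_of_sq_lt
    nlinarith [mul_pos (mul_pos (show (0:ℝ) < 1 - α by linarith)
      (show (0:ℝ) < 3 * α - 1 by linarith)) hq]
  nlinarith

/-- The polynomial `x³ − x² + 2x − 1` has a unique real root `α₀`, with `1/3 < α₀ < 1`;
for `1/3 < α < α₀` one has `g₁(α) > max(1, α/(1−α))`, hence `α·g₁(α) > α²/(1−α)`;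
moreover `g₁(α) > 1` for `1/3 < α < 1`, and `g₁(1/3) = g₁(1) = 1`. -/
theorem g1_properties :
    ∃ α₀ : ℝ,
      (α₀ ^ 3 - α₀ ^ 2 + 2 * α₀ - 1 = 0) ∧
      (∀ x : ℝ, x ^ 3 - x ^ 2 + 2 * x - 1 = 0 → x = α₀) ∧
      1 / 3 < α₀ ∧ α₀ < 1 ∧
      (∀ α : ℝ, 1 / 3 < α → α < α₀ →
        max 1 (α / (1 - α)) < g1 α ∧ α ^ 2 / (1 - α) < α * g1 α) ∧
      (∀ α : ℝ, 1 / 3 < α → α < 1 → 1 < g1 α) ∧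
      g1 (1 / 3) = 1 ∧ g1 1 = 1 := by
  set f : ℝ → ℝ := fun x => x ^ 3 - x ^ 2 + 2 * x - 1 with hf
  have hcont : ContinuousOn f (Set.Icc (1/3 : ℝ) 1) := by
    apply Continuous.continuousOn; continuity
  have h0 : (0:ℝ) ∈ Set.Icc (f (1/3)) (f 1) := by
    constructor <;> (simp only [hf]; norm_num)
  obtain ⟨α₀, hmem, hroot⟩ := intermediate_value_Icc (by norm_num : (1/3:ℝ) ≤ 1) hcont h0
  obtain ⟨hge, hle⟩ := hmem
  have hroot' : α₀ ^ 3 - α₀ ^ 2 + 2 * α₀ - 1 = 0 := hroot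
  have h13 : (1/3 : ℝ) < α₀ := by
    rcases lt_or_eq_of_le hge with h | h
    · exact h
    · exfalso; rw [← h] at hroot'; norm_num at hroot'
  have h1 : α₀ < 1 := by
    rcases lt_or_eq_of_le hle with h | h
    · exact h
    · exfalso; rw [h] at hroot'; norm_num at hroot'
  refine ⟨α₀, hroot', ?_, h13, h1, ?_, fun α ha hb => g1_gt_one ha hb, ?_, ?_⟩
  · intro x hx
    by_contra hne
    rcases lt_or_gt_of_ne hne with h | h
    · have := fmono h; simp only [hx, hroot'] at this; exact lt_irrefl _ this
    · have := fmono h; simp only [hx, hroot'] at this; exact lt_irrefl _ this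
  · intro α ha hb
    have hb1 : α < 1 := lt_trans hb h1
    have h1a : (0:ℝ) < 1 - α := by linarith
    have hαpos : (0:ℝ) < α := by linarith
    have hq := qpos α
    have hfneg : α ^ 3 - α ^ 2 + 2 * α - 1 < 0 := by
      have := fmono hb; simp only [hf, hroot'] at this; exact this
    have hsqrt : α * (3 * α ^ 2 - 2 * α + 1) / (1 - α) <
        Real.sqrt (α ^ 2 * (1 - α) ^ 2 + 4 * α * (2 * α ^ 2 - 2 * α + 1)) := by
      apply Real.lt_sqrt_of_sq_lt
      rw [div_pow, div_lt_iff₀ (by positivity)]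
      nlinarith [mul_pos (mul_pos hαpos hq) (neg_pos.mpr hfneg)]
    have hsqrt' : α * (3 * α ^ 2 - 2 * α + 1) <
        Real.sqrt (α ^ 2 * (1 - α) ^ 2 + 4 * α * (2 * α ^ 2 - 2 * α + 1)) * (1 - α) :=
      (div_lt_iff₀ h1a).mp hsqrt
    have hdiv : α / (1 - α) < g1 α := by
      rw [g1, div_lt_div_iff₀ h1a (by linarith)]
      nlinarith
    have hone : 1 < g1 α := g1_gt_one ha hb1
    refine ⟨max_lt hone hdiv, ?_⟩
    have : α * (α / (1 - α)) < α * g1 α := by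
      exact mul_lt_mul_of_pos_left hdiv hαpos
    calc α ^ 2 / (1 - α) = α * (α / (1 - α)) := by ring
    _ < α * g1 α := this
  · rw [g1]
    have : ((1:ℝ)/3) ^ 2 * (1 - 1/3) ^ 2 + 4 * (1/3) * (2 * (1/3) ^ 2 - 2 * (1/3) + 1)
        = (8/9 : ℝ) ^ 2 := by norm_num
    rw [this, Real.sqrt_sq (by norm_num)]
    norm_num
  · rw [g1]
    have : (1:ℝ) ^ 2 * (1 - 1) ^ 2 + 4 * 1 * (2 * 1 ^ 2 - 2 * 1 + 1) = (2:ℝ) ^ 2 := by norm_num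
    rw [this, Real.sqrt_sq (by norm_num)]
    norm_num
end

section
/- Let 1/3 ≤ α < 1, set δ = g₁(α) and γ = α(1+δ)/(δ(1−α)). Then γ and δ are positive, γ(1−α) − α > 0, and they satisfy the system of equations δ = 1/α + ((α−1)/α)·(δ/γ) and δ = α/(γ(1−α) − α). -/
/-- For `1/3 ≤ α < 1`, setting `δ = g₁(α)` and `γ = α(1+δ)/(δ(1−α))`, one has `γ, δ > 0`,
`γ(1−α) − α > 0`, and `δ = 1/α + ((α−1)/α)·(δ/γ) = α/(γ(1−α) − α)`. -/
theorem g1_system (α δ γ : ℝ) (h1 : 1 / 3 ≤ α) (h2 : α < 1)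
    (hδ : δ = g1 α) (hγ : γ = α * (1 + δ) / (δ * (1 - α))) :
    0 < γ ∧ 0 < δ ∧ 0 < γ * (1 - α) - α ∧
      δ = 1 / α + ((α - 1) / α) * (δ / γ) ∧
      δ = α / (γ * (1 - α) - α) := by
  have hα : 0 < α := by linarith
  have h1α : 0 < 1 - α := by linarith
  have ha : 0 < 2 * α ^ 2 - 2 * α + 1 := by nlinarith
  have hrad : 0 ≤ α ^ 2 * (1 - α) ^ 2 + 4 * α * (2 * α ^ 2 - 2 * α + 1) := by positivity
  set s := Real.sqrt (α ^ 2 * (1 - α) ^ 2 + 4 * α * (2 * α ^ 2 - 2 * α + 1)) with hsdef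
  have hs2 : s ^ 2 = α ^ 2 * (1 - α) ^ 2 + 4 * α * (2 * α ^ 2 - 2 * α + 1) :=
    Real.sq_sqrt hrad
  have hs0 : 0 ≤ s := Real.sqrt_nonneg _
  have hδpos : 0 < δ := by
    rw [hδ, g1]
    apply div_pos
    · nlinarith
    · linarith
  have hkey : (2 * α ^ 2 - 2 * α + 1) * δ ^ 2 = α * (1 - α) * δ + α := by
    have h2a : 2 * (2 * α ^ 2 - 2 * α + 1) * δ = α * (1 - α) + s := by
      have hne : 2 * α * (α - 1) + 1 ≠ 0 := by nlinarith
      rw [hδ, g1, ← hsdef]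
      field_simp
    nlinarith [hs2, h2a]
  have hγpos : 0 < γ := by
    rw [hγ]
    apply div_pos
    · nlinarith
    · positivity
  have hδne : δ ≠ 0 := ne_of_gt hδpos
  have h1αne : (1 - α) ≠ 0 := ne_of_gt h1α
  have hγeq : γ * (1 - α) - α = α / δ := by
    rw [hγ]; field_simp; ring
  have hc : 0 < γ * (1 - α) - α := by
    rw [hγeq]; positivity
  refine ⟨hγpos, hδpos, hc, ?_, ?_⟩
  · rw [hγ]
    field_simp
    linear_combination hkey
  · rw [hγeq]
    field_simp
end

section
/- Let θ₁, θ₂, θ₃ be real numbers. For i = 1, 2, 3, 4 let x_i ∈ ℤ and y_{1,i}, y_{2,i}, y_{3,i} ∈ ℤ, and set ζ_i = max_{1≤j≤3} |θ_j x_i + y_{j,i}|. Suppose ζ₁ ≥ ζ₂ ≥ ζ₃ ≥ ζ₄ and |x₁| ≤ |x₂| ≤ |x₃| ≤ |x₄|. Then the absolute value of the determinant of the 4×4 matrix whose i-th row is (y_{1,i}, y_{2,i}, y_{3,i}, x_i) is at most 24·ζ₁·ζ₂·ζ₃·|x₄|. -/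
set_option maxHeartbeats 2000000 in
private lemma det_estimate_aux_prod (ζ : Fin 4 → ℝ) (hnn : ∀ i, 0 ≤ ζ i)
    (hζ4 : ζ 3 ≤ ζ 2) (hζ3 : ζ 2 ≤ ζ 1) (hζ2 : ζ 1 ≤ ζ 0) :
    ∀ a b c : Fin 4, a ≠ b → a ≠ c → b ≠ c →
      ζ a * ζ b * ζ c ≤ ζ 0 * ζ 1 * ζ 2 := by
  have h31 : ζ 3 ≤ ζ 1 := hζ4.trans hζ3
  have h30 : ζ 3 ≤ ζ 0 := h31.trans hζ2
  have h20 : ζ 2 ≤ ζ 0 := hζ3.trans hζ2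
  intro a b c hab hac hbc
  fin_cases a <;> fin_cases b <;> fin_cases c <;> simp_all <;>
    nlinarith [hnn 0, hnn 1, hnn 2, hnn 3, mul_nonneg (hnn 0) (hnn 1),
      mul_nonneg (hnn 0) (hnn 2), mul_nonneg (hnn 1) (hnn 2),
      mul_nonneg (hnn 0) (hnn 3), mul_nonneg (hnn 1) (hnn 3),
      mul_nonneg (hnn 2) (hnn 3)]

set_option maxHeartbeats 1000000 in
/-- The determinant estimate used in the proof of Theorem 2 (case `m = 1`, `n = 3`):
if `ζᵢ = max_j |θ_j xᵢ + y_{j,i}|` with `ζ₁ ≥ ζ₂ ≥ ζ₃ ≥ ζ₄` and `|x₁| ≤ |x₂| ≤ |x₃| ≤ |x₄|`,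
then the determinant of the matrix with rows `(y_{1,i}, y_{2,i}, y_{3,i}, xᵢ)` is at most
`24·ζ₁·ζ₂·ζ₃·|x₄|` in absolute value. -/
theorem det_estimate_m1_n3 (θ : Fin 3 → ℝ) (x : Fin 4 → ℤ) (y : Fin 4 → Fin 3 → ℤ)
    (ζ : Fin 4 → ℝ)
    (hζ : ∀ i, ζ i = ⨆ j : Fin 3, |θ j * (x i : ℝ) + (y i j : ℝ)|)
    (hζ4 : ζ 3 ≤ ζ 2) (hζ3 : ζ 2 ≤ ζ 1) (hζ2 : ζ 1 ≤ ζ 0)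
    (hx2 : |x 0| ≤ |x 1|) (hx3 : |x 1| ≤ |x 2|) (hx4 : |x 2| ≤ |x 3|) :
    |(Matrix.of fun i : Fin 4 =>
        ![(y i 0 : ℝ), (y i 1 : ℝ), (y i 2 : ℝ), (x i : ℝ)]).det| ≤
      24 * ζ 0 * ζ 1 * ζ 2 * |(x 3 : ℝ)| := by
  set z : Fin 4 → Fin 3 → ℝ := fun i j => θ j * (x i : ℝ) + (y i j : ℝ) with hzdef
  have hz : ∀ i j, |z i j| ≤ ζ i := by
    intro i j
    rw [hζ i]
    exact le_ciSup (f := fun j : Fin 3 => |z i j|)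
      (Set.Finite.bddAbove (Set.finite_range _)) j
  have hznn : ∀ i, 0 ≤ ζ i := fun i => (abs_nonneg _).trans (hz i 0)
  have hxabs : ∀ i, |(x i : ℝ)| ≤ |(x 3 : ℝ)| := by
    intro i
    have h : |x i| ≤ |x 3| := by fin_cases i <;> simp <;> omega
    calc |(x i : ℝ)| = ((|x i| : ℤ) : ℝ) := by push_cast; ring
      _ ≤ ((|x 3| : ℤ) : ℝ) := by exact_mod_cast h
      _ = |(x 3 : ℝ)| := by push_cast; ring
  have hprod := det_estimate_aux_prod ζ hznn hζ4 hζ3 hζ2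
  set B : Matrix (Fin 4) (Fin 4) ℝ :=
    Matrix.of fun i : Fin 4 => ![z i 0, z i 1, z i 2, (x i : ℝ)] with hBdef
  set A : Matrix (Fin 4) (Fin 4) ℝ :=
    Matrix.of fun i : Fin 4 => ![(y i 0 : ℝ), (y i 1 : ℝ), (y i 2 : ℝ), (x i : ℝ)] with hA
  set A1 : Matrix (Fin 4) (Fin 4) ℝ :=
    A.updateCol 0 (fun k => A k 0 + θ 0 • A k 3) with hA1
  set A2 : Matrix (Fin 4) (Fin 4) ℝ :=
    A1.updateCol 1 (fun k => A1 k 1 + θ 1 • A1 k 3) with hA2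
  set A3 : Matrix (Fin 4) (Fin 4) ℝ :=
    A2.updateCol 2 (fun k => A2 k 2 + θ 2 • A2 k 3) with hA3
  have e0 : A1.det = A.det :=
    Matrix.det_updateCol_add_smul_self A (i := 0) (j := 3) (by decide) (θ 0)
  have e1 : A2.det = A1.det :=
    Matrix.det_updateCol_add_smul_self A1 (i := 1) (j := 3) (by decide) (θ 1)
  have e2 : A3.det = A2.det :=
    Matrix.det_updateCol_add_smul_self A2 (i := 2) (j := 3) (by decide) (θ 2)
  have hAB : A3 = B := by
    ext i j
    fin_cases j <;>
      simp [hA3, hA2, hA1, hA, hBdef, hzdef, Matrix.updateCol_apply] <;> ring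
  have hdet : A.det = B.det := by rw [← hAB, e2, e1, e0]
  rw [hdet, Matrix.det_apply]
  have hterm : ∀ σ : Equiv.Perm (Fin 4),
      |Equiv.Perm.sign σ • ∏ i, B (σ i) i| ≤ ζ 0 * ζ 1 * ζ 2 * |(x 3 : ℝ)| := by
    intro σ
    have hs : |Equiv.Perm.sign σ • ∏ i, B (σ i) i| = |∏ i, B (σ i) i| := by
      rcases Int.units_eq_one_or (Equiv.Perm.sign σ) with h | h <;>
        simp [h, Units.smul_def]
    rw [hs, Fin.prod_univ_four]
    have hB0 : ∀ i, B i 0 = z i 0 := fun i => rfl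
    have hB1 : ∀ i, B i 1 = z i 1 := fun i => rfl
    have hB2 : ∀ i, B i 2 = z i 2 := fun i => rfl
    have hB3 : ∀ i, B i 3 = (x i : ℝ) := fun i => rfl
    rw [hB0, hB1, hB2, hB3, abs_mul, abs_mul, abs_mul]
    have h1 : |z (σ 0) 0| * |z (σ 1) 1| * |z (σ 2) 2| * |(x (σ 3) : ℝ)| ≤
        ζ (σ 0) * ζ (σ 1) * ζ (σ 2) * |(x 3 : ℝ)| :=
      mul_le_mul
        (mul_le_mul
          (mul_le_mul (hz _ 0) (hz _ 1) (abs_nonneg _) (hznn _))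
          (hz _ 2) (abs_nonneg _) (mul_nonneg (hznn _) (hznn _)))
        (hxabs _) (abs_nonneg _)
        (mul_nonneg (mul_nonneg (hznn _) (hznn _)) (hznn _))
    refine h1.trans ?_
    exact mul_le_mul_of_nonneg_right
      (hprod _ _ _ (fun h => by simpa using σ.injective h)
        (fun h => by simpa using σ.injective h)
        (fun h => by simpa using σ.injective h)) (abs_nonneg _)
  calc |∑ σ : Equiv.Perm (Fin 4), Equiv.Perm.sign σ • ∏ i, B (σ i) i|
      ≤ ∑ σ : Equiv.Perm (Fin 4), |Equiv.Perm.sign σ • ∏ i, B (σ i) i| :=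
        Finset.abs_sum_le_sum_abs _ _
    _ ≤ ∑ _σ : Equiv.Perm (Fin 4), ζ 0 * ζ 1 * ζ 2 * |(x 3 : ℝ)| :=
        Finset.sum_le_sum fun σ _ => hterm σ
    _ = 24 * ζ 0 * ζ 1 * ζ 2 * |(x 3 : ℝ)| := by
        rw [Finset.sum_const]
        have : (Finset.univ : Finset (Equiv.Perm (Fin 4))).card = 24 := by
          simp [Fintype.card_perm]
          rfl
        rw [this]
        ring
end

section
/- Let θ¹, θ², θ³ be real numbers. For i = 1, 2, 3, 4 let x_{1,i}, x_{2,i}, x_{3,i} ∈ ℤ and y_i ∈ ℤ, and set ζ_i = |θ¹x_{1,i} + θ²x_{2,i} + θ³x_{3,i} + y_i| and M_i = max(|x_{1,i}|, |x_{2,i}|, |x_{3,i}|). Suppose ζ₁ ≥ ζ₂ ≥ ζ₃ ≥ ζ₄ and M₁ ≤ M₂ ≤ M₃ ≤ M₄. Then the absolute value of the determinant of the 4×4 matrix whose i-th row is (x_{1,i}, x_{2,i}, x_{3,i}, y_i) is at most 24·ζ₁·M₂·M₃·M₄. -/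
private lemma abs_mul3_le {a b c A B C : ℝ} (ha : |a| ≤ A) (hb : |b| ≤ B)
    (hc : |c| ≤ C) : |a * b * c| ≤ A * B * C := by
  rw [abs_mul, abs_mul]
  exact mul_le_mul (mul_le_mul ha hb (abs_nonneg _) ((abs_nonneg a).trans ha)) hc
    (abs_nonneg _) (mul_nonneg ((abs_nonneg a).trans ha) ((abs_nonneg b).trans hb))

/-- bound for a 3×3 determinant whose rows are bounded by `A`, `B`, `C`. -/
private lemma det3_bound {a b c d e f g h i A B C : ℝ}
    (ha : |a| ≤ A) (hb : |b| ≤ A) (hc : |c| ≤ A) (hd : |d| ≤ B) (he : |e| ≤ B)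
    (hf : |f| ≤ B) (hg : |g| ≤ C) (hh : |h| ≤ C) (hi : |i| ≤ C) :
    |a * (e * i - f * h) - b * (d * i - f * g) + c * (d * h - e * g)| ≤
      6 * (A * B * C) := by
  have h1 : |a * e * i| ≤ A * B * C := abs_mul3_le ha he hi
  have h2 : |a * f * h| ≤ A * B * C := abs_mul3_le ha hf hh
  have h3 : |b * d * i| ≤ A * B * C := abs_mul3_le hb hd hi
  have h4 : |b * f * g| ≤ A * B * C := abs_mul3_le hb hf hg
  have h5 : |c * d * h| ≤ A * B * C := abs_mul3_le hc hd hh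
  have h6 : |c * e * g| ≤ A * B * C := abs_mul3_le hc he hg
  have e1 : a * (e * i - f * h) - b * (d * i - f * g) + c * (d * h - e * g) =
      a * e * i + -(a * f * h) + -(b * d * i) + b * f * g + c * d * h + -(c * e * g) := by
    ring
  rw [e1]
  calc |a * e * i + -(a * f * h) + -(b * d * i) + b * f * g + c * d * h + -(c * e * g)|
      ≤ |a * e * i| + |-(a * f * h)| + |-(b * d * i)| + |b * f * g| + |c * d * h| +
        |-(c * e * g)| := by
        exact (abs_add_le _ _).trans (add_le_add ((abs_add_le _ _).trans (add_le_add
          ((abs_add_le _ _).trans (add_le_add ((abs_add_le _ _).trans (add_le_add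
          ((abs_add_le _ _).trans (add_le_add le_rfl le_rfl)) le_rfl)) le_rfl)) le_rfl)) le_rfl)
    _ ≤ 6 * (A * B * C) := by
        rw [abs_neg, abs_neg, abs_neg]; nlinarith [h1, h2, h3, h4, h5, h6]

set_option maxHeartbeats 1000000 in
/-- The determinant estimate used in the proof of Theorem 3 (case `m = 3`, `n = 1`):
if `ζᵢ = |θ¹x_{1,i} + θ²x_{2,i} + θ³x_{3,i} + yᵢ|` and `Mᵢ = max_j |x_{j,i}|`, with
`ζ₁ ≥ ζ₂ ≥ ζ₃ ≥ ζ₄` and `M₁ ≤ M₂ ≤ M₃ ≤ M₄`, then the determinant of the matrix with rows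
`(x_{1,i}, x_{2,i}, x_{3,i}, yᵢ)` is at most `24·ζ₁·M₂·M₃·M₄` in absolute value. -/
theorem det_estimate_m3_n1 (θ : Fin 3 → ℝ) (x : Fin 4 → Fin 3 → ℤ) (y : Fin 4 → ℤ)
    (ζ M : Fin 4 → ℝ)
    (hζ : ∀ i, ζ i = |(∑ j : Fin 3, θ j * (x i j : ℝ)) + (y i : ℝ)|)
    (hM : ∀ i, M i = ⨆ j : Fin 3, |(x i j : ℝ)|)
    (hζ4 : ζ 3 ≤ ζ 2) (hζ3 : ζ 2 ≤ ζ 1) (hζ2 : ζ 1 ≤ ζ 0)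
    (hM2 : M 0 ≤ M 1) (hM3 : M 1 ≤ M 2) (hM4 : M 2 ≤ M 3) :
    |(Matrix.of fun i : Fin 4 =>
        ![(x i 0 : ℝ), (x i 1 : ℝ), (x i 2 : ℝ), (y i : ℝ)]).det| ≤
      24 * ζ 0 * M 1 * M 2 * M 3 := by
  -- the entries bounded by the row maxima
  have hxM : ∀ i j, |(x i j : ℝ)| ≤ M i := by
    intro i j
    rw [hM i]
    exact le_ciSup (f := fun j => |(x i j : ℝ)|) (Set.Finite.bddAbove (Set.finite_range _)) j
  -- the linear forms
  set L : Fin 4 → ℝ := fun i => θ 0 * (x i 0 : ℝ) + θ 1 * (x i 1 : ℝ) + θ 2 * (x i 2 : ℝ) + (y i : ℝ)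
    with hL
  have hLζ : ∀ i, |L i| = ζ i := by
    intro i
    rw [hζ i, Fin.sum_univ_three, hL]
  -- the cofactors
  set D : Fin 4 → ℝ := fun i =>
    (x (if i = 0 then 1 else 0) 0 : ℝ) *
        ((x (if i ≤ 1 then 2 else 1) 1 : ℝ) * (x (if i = 3 then 2 else 3) 2 : ℝ) -
          (x (if i ≤ 1 then 2 else 1) 2 : ℝ) * (x (if i = 3 then 2 else 3) 1 : ℝ)) -
      (x (if i = 0 then 1 else 0) 1 : ℝ) *
        ((x (if i ≤ 1 then 2 else 1) 0 : ℝ) * (x (if i = 3 then 2 else 3) 2 : ℝ) -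
          (x (if i ≤ 1 then 2 else 1) 2 : ℝ) * (x (if i = 3 then 2 else 3) 0 : ℝ)) +
      (x (if i = 0 then 1 else 0) 2 : ℝ) *
        ((x (if i ≤ 1 then 2 else 1) 0 : ℝ) * (x (if i = 3 then 2 else 3) 1 : ℝ) -
          (x (if i ≤ 1 then 2 else 1) 1 : ℝ) * (x (if i = 3 then 2 else 3) 0 : ℝ)) with hD
  -- the column-operation / cofactor expansion identity
  have hdet : (Matrix.of fun i : Fin 4 =>
      ![(x i 0 : ℝ), (x i 1 : ℝ), (x i 2 : ℝ), (y i : ℝ)]).det =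
      -(L 0 * D 0) + L 1 * D 1 - L 2 * D 2 + L 3 * D 3 := by
    simp only [hL, hD]
    norm_num
    simp [Matrix.det_succ_row_zero, Fin.sum_univ_succ, Fin.succAbove,
      show (Fin.succ 2 : Fin 4) = 3 from rfl, show (Fin.castSucc 2 : Fin 4) = 2 from rfl,
      show (if (1:Fin 4) < Fin.succ 2 then (1:Fin 4) else 2) = 1 from rfl]
    ring
  -- bounds on the cofactors
  have hM1nn : (0:ℝ) ≤ M 1 := (abs_nonneg _).trans (hxM 1 0)
  have hM2nn : (0:ℝ) ≤ M 2 := (abs_nonneg _).trans (hxM 2 0)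
  have hM3nn : (0:ℝ) ≤ M 3 := (abs_nonneg _).trans (hxM 3 0)
  have hDb : ∀ i, |D i| ≤ 6 * (M 1 * M 2 * M 3) := by
    intro i
    fin_cases i <;> simp only [hD] <;> norm_num
    · exact det3_bound (hxM 1 0) (hxM 1 1) (hxM 1 2) (hxM 2 0) (hxM 2 1) (hxM 2 2)
        (hxM 3 0) (hxM 3 1) (hxM 3 2)
    · exact det3_bound ((hxM 0 0).trans hM2) ((hxM 0 1).trans hM2) ((hxM 0 2).trans hM2)
        (hxM 2 0) (hxM 2 1) (hxM 2 2) (hxM 3 0) (hxM 3 1) (hxM 3 2)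
    · exact det3_bound ((hxM 0 0).trans hM2) ((hxM 0 1).trans hM2) ((hxM 0 2).trans hM2)
        ((hxM 1 0).trans hM3) ((hxM 1 1).trans hM3) ((hxM 1 2).trans hM3)
        (hxM 3 0) (hxM 3 1) (hxM 3 2)
    · exact det3_bound ((hxM 0 0).trans hM2) ((hxM 0 1).trans hM2) ((hxM 0 2).trans hM2)
        ((hxM 1 0).trans hM3) ((hxM 1 1).trans hM3) ((hxM 1 2).trans hM3)
        ((hxM 2 0).trans hM4) ((hxM 2 1).trans hM4) ((hxM 2 2).trans hM4)
  have hζnn : (0:ℝ) ≤ ζ 0 := by rw [hζ 0]; exact abs_nonneg _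
  have hLb : ∀ i, |L i| ≤ ζ 0 := by
    intro i
    rw [hLζ i]
    fin_cases i
    · exact le_rfl
    · exact hζ2
    · exact hζ3.trans hζ2
    · exact (hζ4.trans hζ3).trans hζ2
  have hterm : ∀ i, |L i * D i| ≤ ζ 0 * (6 * (M 1 * M 2 * M 3)) := by
    intro i
    rw [abs_mul]
    exact mul_le_mul (hLb i) (hDb i) (abs_nonneg _) hζnn
  rw [hdet]
  have h0 := hterm 0
  have h1 := hterm 1
  have h2 := hterm 2
  have h3 := hterm 3
  calc |-(L 0 * D 0) + L 1 * D 1 - L 2 * D 2 + L 3 * D 3|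
      ≤ |L 0 * D 0| + |L 1 * D 1| + |L 2 * D 2| + |L 3 * D 3| := by
        have e1 : -(L 0 * D 0) + L 1 * D 1 - L 2 * D 2 + L 3 * D 3 =
            -(L 0 * D 0) + L 1 * D 1 + -(L 2 * D 2) + L 3 * D 3 := by ring
        rw [e1]
        exact (abs_add_le _ _).trans (add_le_add ((abs_add_le _ _).trans (add_le_add
          ((abs_add_le _ _).trans (by rw [abs_neg])) (by rw [abs_neg]))) le_rfl)
    _ ≤ 24 * ζ 0 * M 1 * M 2 * M 3 := by nlinarith [h0, h1, h2, h3]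
end

section
/- Let θ₁¹, θ₁², θ₂¹, θ₂² be real numbers. For i = 1, 2, 3, 4 let x_{1,i}, x_{2,i}, y_{1,i}, y_{2,i} ∈ ℤ, and set ζ_i = max_{j=1,2} |θ_j¹ x_{1,i} + θ_j² x_{2,i} + y_{j,i}| and M_i = max(|x_{1,i}|, |x_{2,i}|). Suppose ζ₁ ≥ ζ₂ ≥ ζ₃ ≥ ζ₄ and M₁ ≤ M₂ ≤ M₃ ≤ M₄. Then the absolute value of the determinant of the 4×4 matrix whose i-th row is (x_{1,i}, x_{2,i}, y_{1,i}, y_{2,i}) is at most 24·ζ₁·ζ₂·M₃·M₄. -/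
private lemma pair_anti (f : Fin 4 → ℝ) (h0 : 0 ≤ f 3) (h43 : f 3 ≤ f 2)
    (h32 : f 2 ≤ f 1) (h21 : f 1 ≤ f 0) (a b : Fin 4) (hab : a ≠ b) :
    f a * f b ≤ f 0 * f 1 := by
  fin_cases a <;> fin_cases b <;> simp_all <;> nlinarith

private lemma pair_mono (f : Fin 4 → ℝ) (h0 : 0 ≤ f 0) (h01 : f 0 ≤ f 1)
    (h12 : f 1 ≤ f 2) (h23 : f 2 ≤ f 3) (a b : Fin 4) (hab : a ≠ b) :
    f a * f b ≤ f 2 * f 3 := by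
  fin_cases a <;> fin_cases b <;> simp_all <;> nlinarith

private lemma ciSup_fin2 (g : Fin 2 → ℝ) : (⨆ j, g j) = max (g 0) (g 1) := by
  apply le_antisymm
  · exact ciSup_le fun j => by fin_cases j <;> simp [le_max_left, le_max_right]
  · exact max_le (le_ciSup (Set.Finite.bddAbove (Set.finite_range g)) 0)
      (le_ciSup (Set.Finite.bddAbove (Set.finite_range g)) 1)

set_option maxHeartbeats 1000000 in
/-- The determinant estimate used in the proof of Theorem 4 (case `m = n = 2`):
if `ζᵢ = max_j |θ_j¹x_{1,i} + θ_j²x_{2,i} + y_{j,i}|` and `Mᵢ = max(|x_{1,i}|, |x_{2,i}|)`,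
with `ζ₁ ≥ ζ₂ ≥ ζ₃ ≥ ζ₄` and `M₁ ≤ M₂ ≤ M₃ ≤ M₄`, then the determinant of the matrix with
rows `(x_{1,i}, x_{2,i}, y_{1,i}, y_{2,i})` is at most `24·ζ₁·ζ₂·M₃·M₄` in absolute value. -/
theorem det_estimate_m2_n2 (θ : Fin 2 → Fin 2 → ℝ)
    (x : Fin 4 → Fin 2 → ℤ) (y : Fin 4 → Fin 2 → ℤ) (ζ M : Fin 4 → ℝ)
    (hζ : ∀ i, ζ i =
      ⨆ j : Fin 2, |θ j 0 * (x i 0 : ℝ) + θ j 1 * (x i 1 : ℝ) + (y i j : ℝ)|)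
    (hM : ∀ i, M i = max |(x i 0 : ℝ)| |(x i 1 : ℝ)|)
    (hζ4 : ζ 3 ≤ ζ 2) (hζ3 : ζ 2 ≤ ζ 1) (hζ2 : ζ 1 ≤ ζ 0)
    (hM2 : M 0 ≤ M 1) (hM3 : M 1 ≤ M 2) (hM4 : M 2 ≤ M 3) :
    |(Matrix.of fun i : Fin 4 =>
        ![(x i 0 : ℝ), (x i 1 : ℝ), (y i 0 : ℝ), (y i 1 : ℝ)]).det| ≤
      24 * ζ 0 * ζ 1 * M 2 * M 3 := by
  set L : Fin 2 → Fin 4 → ℝ :=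
    fun j i => θ j 0 * (x i 0 : ℝ) + θ j 1 * (x i 1 : ℝ) + (y i j : ℝ) with hL
  set O : Matrix (Fin 4) (Fin 4) ℝ := Matrix.of fun i : Fin 4 =>
    ![(x i 0 : ℝ), (x i 1 : ℝ), (y i 0 : ℝ), (y i 1 : ℝ)] with hO
  set N : Matrix (Fin 4) (Fin 4) ℝ := Matrix.of fun i : Fin 4 =>
    ![(x i 0 : ℝ), (x i 1 : ℝ), L 0 i, L 1 i] with hN
  set U : Matrix (Fin 4) (Fin 4) ℝ :=
    !![1, 0, θ 0 0, θ 1 0; 0, 1, θ 0 1, θ 1 1; 0, 0, 1, 0; 0, 0, 0, 1] with hU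
  -- basic bounds
  have hζeq : ∀ i, ζ i = max |L 0 i| |L 1 i| := fun i => by
    rw [hζ i, ciSup_fin2]
  have hζnn : ∀ i, 0 ≤ ζ i := fun i => by
    rw [hζeq i]; exact le_trans (abs_nonneg _) (le_max_left _ _)
  have hMnn : ∀ i, 0 ≤ M i := fun i => by
    rw [hM i]; exact le_trans (abs_nonneg _) (le_max_left _ _)
  have hLζ : ∀ j i, |L j i| ≤ ζ i := fun j i => by
    rw [hζeq i]; fin_cases j
    exacts [le_max_left _ _, le_max_right _ _]
  have hxM : ∀ (k : Fin 2) i, |(x i k : ℝ)| ≤ M i := fun k i => by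
    rw [hM i]; fin_cases k
    exacts [le_max_left _ _, le_max_right _ _]
  -- column operation: det O = det N
  have hmul : O * U = N := by
    ext i c
    fin_cases i <;> fin_cases c <;>
      simp [hO, hN, hU, Matrix.mul_apply, Fin.sum_univ_four, hL,
        Matrix.vecHead, Matrix.vecTail] <;> ring
  have hdetU : U.det = 1 := by
    have ht : U.BlockTriangular id := by
      intro i j hij
      fin_cases i <;> fin_cases j <;>
        first
          | exact absurd hij (by decide)
          | simp [hU, Matrix.vecHead, Matrix.vecTail]
    rw [Matrix.det_of_upperTriangular ht, Fin.prod_univ_four]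
    simp [hU]
  have hdet : O.det = N.det := by
    rw [← hmul, Matrix.det_mul, hdetU, mul_one]
  rw [hdet]
  -- bound det N termwise
  have hNentry : ∀ (σ : Equiv.Perm (Fin 4)),
      |∏ i, N (σ i) i| ≤ ζ 0 * ζ 1 * M 2 * M 3 := by
    intro σ
    rw [Finset.abs_prod, Fin.prod_univ_four]
    have e0 : |N (σ 0) 0| ≤ M (σ 0) := by simpa [hN] using hxM 0 (σ 0)
    have e1 : |N (σ 1) 1| ≤ M (σ 1) := by simpa [hN] using hxM 1 (σ 1)
    have e2 : |N (σ 2) 2| ≤ ζ (σ 2) := by simpa [hN] using hLζ 0 (σ 2)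
    have e3 : |N (σ 3) 3| ≤ ζ (σ 3) := by simpa [hN] using hLζ 1 (σ 3)
    have hM' : M (σ 0) * M (σ 1) ≤ M 2 * M 3 :=
      pair_mono M (hMnn 0) hM2 hM3 hM4 (σ 0) (σ 1) (σ.injective.ne (by decide))
    have hζ' : ζ (σ 2) * ζ (σ 3) ≤ ζ 0 * ζ 1 :=
      pair_anti ζ (hζnn 3) hζ4 hζ3 hζ2 (σ 2) (σ 3) (σ.injective.ne (by decide))
    calc |N (σ 0) 0| * |N (σ 1) 1| * |N (σ 2) 2| * |N (σ 3) 3|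
        ≤ M (σ 0) * M (σ 1) * (ζ (σ 2) * ζ (σ 3)) := by
          rw [mul_assoc]
          apply mul_le_mul (mul_le_mul e0 e1 (abs_nonneg _)
            (le_trans (abs_nonneg _) e0))
            (mul_le_mul e2 e3 (abs_nonneg _) (le_trans (abs_nonneg _) e2))
            (mul_nonneg (abs_nonneg _) (abs_nonneg _))
            (mul_nonneg (le_trans (abs_nonneg _) e0) (le_trans (abs_nonneg _) e1))
      _ ≤ M 2 * M 3 * (ζ 0 * ζ 1) :=
          mul_le_mul hM' hζ'
            (mul_nonneg (hζnn _) (hζnn _))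
            (mul_nonneg (hMnn _) (hMnn _))
      _ = ζ 0 * ζ 1 * M 2 * M 3 := by ring
  rw [Matrix.det_apply']
  calc |∑ σ : Equiv.Perm (Fin 4), ((Equiv.Perm.sign σ : ℤ) : ℝ) * ∏ i, N (σ i) i|
      ≤ ∑ σ : Equiv.Perm (Fin 4), |((Equiv.Perm.sign σ : ℤ) : ℝ) * ∏ i, N (σ i) i| :=
        Finset.abs_sum_le_sum_abs _ _
    _ ≤ ∑ _σ : Equiv.Perm (Fin 4), ζ 0 * ζ 1 * M 2 * M 3 := by
        apply Finset.sum_le_sum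
        intro σ _
        rw [abs_mul]
        have hs : |((Equiv.Perm.sign σ : ℤ) : ℝ)| = 1 := by
          rcases Int.units_eq_one_or (Equiv.Perm.sign σ) with h | h <;> rw [h] <;> norm_num
        rw [hs, one_mul]
        exact hNentry σ
    _ = 24 * ζ 0 * ζ 1 * M 2 * M 3 := by
        rw [Finset.sum_const, Finset.card_univ, Fintype.card_perm, Fintype.card_fin]
        norm_num [Nat.factorial]
        ring
end

section
/- (Lemma 1) Let θ₁, θ₂, θ₃ be real numbers such that 1, θ₁, θ₂, θ₃ are linearly independent over ℚ. Then there exist constants C ≥ c > 0, depending only on (θ₁, θ₂, θ₃), with the following property. Whenever a ≤ b are indices such that all the vectors z_ν, for a ≤ ν ≤ b, lie in a common two-dimensional linear subspace π of ℝ⁴, one has c·ζ_{ν₂}·M_{ν₂+1} ≤ ζ_{ν₁}·M_{ν₁+1} ≤ C·ζ_{ν₂}·M_{ν₂+1} for all ν₁, ν₂ with a ≤ ν₁, ν₂ ≤ b − 1. -/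
set_option maxHeartbeats 1000000


lemma nid_nonneg (x : ℝ) : 0 ≤ nid x := abs_nonneg _

lemma nid_le_half (x : ℝ) : nid x ≤ 1/2 := abs_sub_round x

lemma nid_le_abs_add_int (x : ℝ) (n : ℤ) : nid x ≤ |x + n| := by
  have h := round_le x (-n)
  simpa [nid, sub_neg_eq_add] using h

/-- **Lemma 1.** Let `1, θ₁, θ₂, θ₃` be linearly independent over `ℚ`, and let
`M₁ < M₂ < …` be the sequence of (positive) best approximations for simultaneous
approximation to `θ₁, θ₂, θ₃`, with `ζ_ν = max_j ‖θ_j M_ν‖` and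
`z_ν = (M_ν, y_{1,ν}, y_{2,ν}, y_{3,ν}) ∈ ℤ⁴` the associated integer vectors.
There are constants `C ≥ c > 0`, depending only on `θ`, such that whenever all the
vectors `z_ν` with `a ≤ ν ≤ b` lie in a common two-dimensional linear subspace `π ⊆ ℝ⁴`,
one has `ζ_{ν₁} M_{ν₁+1} ≍ ζ_{ν₂} M_{ν₂+1}` for all `a ≤ ν₁, ν₂ ≤ b − 1`. -/
theorem lemma1_best_approx_in_plane (θ : Fin 3 → ℝ)
    (hli : LinearIndependent ℚ ![(1 : ℝ), θ 0, θ 1, θ 2])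
    (M : ℕ → ℤ) (y : ℕ → Fin 3 → ℤ) (ζ : ℕ → ℝ)
    (hMpos : ∀ ν, 0 < M ν)
    (hMmono : StrictMono M)
    (hζ : ∀ ν, ζ ν = ⨆ j : Fin 3, nid (θ j * (M ν : ℝ)))
    (hζanti : StrictAnti ζ)
    (hbest : ∀ (ν : ℕ) (x : ℤ), x ≠ 0 → |x| < M (ν + 1) →
      ζ ν ≤ ⨆ j : Fin 3, nid (θ j * (x : ℝ)))
    (hy : ∀ ν j, nid (θ j * (M ν : ℝ)) = |θ j * (M ν : ℝ) + (y ν j : ℝ)|) :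
    ∃ c C : ℝ, 0 < c ∧ c ≤ C ∧
      ∀ (a b : ℕ) (π : Submodule ℝ (Fin 4 → ℝ)), a ≤ b → Module.finrank ℝ π = 2 →
        (∀ ν, a ≤ ν → ν ≤ b →
          (![(M ν : ℝ), (y ν 0 : ℝ), (y ν 1 : ℝ), (y ν 2 : ℝ)] : Fin 4 → ℝ) ∈ π) →
        ∀ ν₁ ν₂ : ℕ, a ≤ ν₁ → ν₁ + 1 ≤ b → a ≤ ν₂ → ν₂ + 1 ≤ b →
          c * (ζ ν₂ * (M (ν₂ + 1) : ℝ)) ≤ ζ ν₁ * (M (ν₁ + 1) : ℝ) ∧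
            ζ ν₁ * (M (ν₁ + 1) : ℝ) ≤ C * (ζ ν₂ * (M (ν₂ + 1) : ℝ)) := by
  classical
  -- remainders
  set r : ℕ → Fin 3 → ℝ := fun ν j => θ j * (M ν : ℝ) + (y ν j : ℝ) with hr
  -- integer vectors (as real vectors)
  set Z : ℕ → Fin 4 → ℝ :=
    fun ν => ![(M ν : ℝ), (y ν 0 : ℝ), (y ν 1 : ℝ), (y ν 2 : ℝ)] with hZdef
  -- the alternating bilinear quantities
  set S : ℕ → Fin 3 → ℝ :=
    fun ν j => (M ν : ℝ) * (y (ν+1) j : ℝ) - (M (ν+1) : ℝ) * (y ν j : ℝ) with hS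
  have hMR : ∀ ν, (0:ℝ) < (M ν : ℝ) := fun ν => by exact_mod_cast hMpos ν
  have hMRlt : ∀ ν, (M ν : ℝ) < (M (ν+1) : ℝ) := fun ν => by
    exact_mod_cast hMmono (Nat.lt_succ_self ν)
  have hζ0 : ∀ ν, 0 ≤ ζ ν := by
    intro ν; rw [hζ]
    exact le_trans (nid_nonneg (θ 0 * (M ν : ℝ)))
      (le_ciSup (f := fun j : Fin 3 => nid (θ j * (M ν : ℝ)))
        (Set.Finite.bddAbove (Set.finite_range _)) 0)
  have hζstep : ∀ ν, ζ (ν+1) < ζ ν := fun ν => hζanti (Nat.lt_succ_self ν)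
  have hζpos : ∀ ν, 0 < ζ ν := fun ν => lt_of_le_of_lt (hζ0 (ν+1)) (hζstep ν)
  have hζhalf : ∀ ν, ζ ν ≤ 1/2 := by
    intro ν; rw [hζ]; exact ciSup_le fun j => nid_le_half _
  have hrle : ∀ ν j, |r ν j| ≤ ζ ν := by
    intro ν j; rw [hζ]
    have h1 : nid (θ j * (M ν : ℝ)) ≤ ⨆ k : Fin 3, nid (θ k * (M ν:ℝ)) :=
      le_ciSup (f := fun k : Fin 3 => nid (θ k * (M ν : ℝ)))
        (Set.Finite.bddAbove (Set.finite_range _)) j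
    rw [hy ν j] at h1
    exact h1
  have hζmax : ∀ ν, ∃ j, ζ ν = |r ν j| := by
    intro ν
    obtain ⟨j, hj⟩ := Finite.exists_max (fun j => nid (θ j * (M ν : ℝ)))
    refine ⟨j, ?_⟩
    rw [hζ]
    have h2 : (⨆ k : Fin 3, nid (θ k * (M ν:ℝ))) = nid (θ j * (M ν:ℝ)) :=
      le_antisymm (ciSup_le hj)
        (le_ciSup (f := fun k : Fin 3 => nid (θ k * (M ν : ℝ)))
          (Set.Finite.bddAbove (Set.finite_range _)) j)
    rw [h2, hy ν j]
  have hbest' : ∀ (ν : ℕ) (x : ℤ) (q : Fin 3 → ℤ), x ≠ 0 → |x| < M (ν+1) →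
      ∃ j, ζ ν ≤ |θ j * (x:ℝ) + (q j : ℝ)| := by
    intro ν x q hx hlt
    have h := hbest ν x hx hlt
    obtain ⟨j, hj⟩ := Finite.exists_max (fun j => nid (θ j * (x:ℝ)))
    have h2 : (⨆ k : Fin 3, nid (θ k * (x:ℝ))) ≤ nid (θ j * (x:ℝ)) := ciSup_le hj
    exact ⟨j, le_trans (h.trans h2) (nid_le_abs_add_int _ _)⟩
  have hSr : ∀ ν j, S ν j = (M ν:ℝ) * r (ν+1) j - (M (ν+1):ℝ) * r ν j := by
    intro ν j; simp only [hS, hr]; ring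
  -- upper bound
  have hF2 : ∀ ν j, |S ν j| ≤ 2 * (ζ ν * (M (ν+1):ℝ)) := by
    intro ν j
    have A := abs_le.mp (hrle (ν+1) j)
    have B := abs_le.mp (hrle ν j)
    have hm := hMR ν; have hm2 := hMR (ν+1); have hlt := hMRlt ν
    have hzz := (hζstep ν).le
    have hz0 := hζ0 (ν+1)
    rw [hSr, abs_le]
    constructor <;> nlinarith [hζ0 ν, mul_le_mul_of_nonneg_left A.2 hm.le,
      mul_le_mul_of_nonneg_left A.1 hm.le, mul_le_mul_of_nonneg_left B.2 hm2.le,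
      mul_le_mul_of_nonneg_left B.1 hm2.le,
      mul_le_mul_of_nonneg_right hlt.le hz0, mul_le_mul_of_nonneg_right hlt.le (hζ0 ν)]
  -- lower bound
  have hF1 : ∀ ν, ∃ j, ζ ν * (M (ν+1):ℝ) ≤ 4 * |S ν j| := by
    intro ν
    by_contra hcon
    push_neg at hcon
    obtain ⟨j₀, hj₀⟩ := hζmax ν
    have c1 := hcon j₀
    -- step 1 : (3/4) M (ν+1) < M ν
    have hA : (M (ν+1):ℝ) * r ν j₀ = (M ν:ℝ) * r (ν+1) j₀ - S ν j₀ := by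
      rw [hSr]; ring
    have habs : (M (ν+1):ℝ) * ζ ν ≤ (M ν:ℝ) * ζ (ν+1) + |S ν j₀| := by
      have h1 : |(M (ν+1):ℝ) * r ν j₀| ≤ |(M ν:ℝ) * r (ν+1) j₀| + |S ν j₀| := by
        rw [hA]; exact abs_sub _ _
      have h2 : |(M (ν+1):ℝ) * r ν j₀| = (M (ν+1):ℝ) * ζ ν := by
        rw [abs_mul, abs_of_pos (hMR (ν+1)), hj₀]
      have h3 : |(M ν:ℝ) * r (ν+1) j₀| ≤ (M ν:ℝ) * ζ (ν+1) := by
        rw [abs_mul, abs_of_pos (hMR ν)]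
        exact mul_le_mul_of_nonneg_left (hrle (ν+1) j₀) (hMR ν).le
      linarith
    have h1 : (3/4) * (M (ν+1):ℝ) < (M ν : ℝ) := by
      have hz := hζpos ν
      have hzz := (hζstep ν).le
      nlinarith [mul_le_mul_of_nonneg_left hzz (hMR ν).le]
    -- step 2 : contradiction via the best approximation property at x = M (ν+1) - M ν
    have hxpos : 0 < M (ν+1) - M ν := sub_pos.mpr (hMmono (Nat.lt_succ_self ν))
    have hxlt : |M (ν+1) - M ν| < M (ν+1) := by
      rw [abs_of_pos hxpos]
      have := hMpos ν; omega
    obtain ⟨j, hj⟩ := hbest' ν (M (ν+1) - M ν) (fun j => y (ν+1) j - y ν j) hxpos.ne' hxlt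
    have hid : θ j * ((M (ν+1) - M ν : ℤ):ℝ) + ((y (ν+1) j - y ν j : ℤ):ℝ)
        = r (ν+1) j - r ν j := by
      simp only [hr]; push_cast; ring
    rw [hid] at hj
    -- M₊ (r₊ - rν) = (M₊ - Mν) r₊ - S ν j
    have hkey : (M (ν+1):ℝ) * (r (ν+1) j - r ν j)
        = ((M (ν+1):ℝ) - (M ν:ℝ)) * r (ν+1) j + S ν j := by
      rw [hSr]; ring
    have hxR : (M (ν+1):ℝ) - (M ν:ℝ) ≤ (1/4) * (M (ν+1):ℝ) := by linarith
    have hbnd : |r (ν+1) j - r ν j| ≤ ζ ν / 2 := by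
      have h4 : |((M (ν+1):ℝ) - (M ν:ℝ)) * r (ν+1) j| ≤ (1/4) * (M (ν+1):ℝ) * ζ ν := by
        rw [abs_mul, abs_of_pos (by linarith [hMRlt ν])]
        have hb1 : |r (ν+1) j| ≤ ζ ν := (hrle (ν+1) j).trans (hζstep ν).le
        nlinarith [abs_nonneg (r (ν+1) j), hMR (ν+1), hζ0 ν]
      have h5 : |(M (ν+1):ℝ) * (r (ν+1) j - r ν j)| ≤ (1/2) * ((M (ν+1):ℝ) * ζ ν) := by
        rw [hkey]
        calc |((M (ν+1):ℝ) - (M ν:ℝ)) * r (ν+1) j + S ν j|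
            ≤ |((M (ν+1):ℝ) - (M ν:ℝ)) * r (ν+1) j| + |S ν j| := abs_add_le _ _
          _ ≤ (1/2) * ((M (ν+1):ℝ) * ζ ν) := by
              have := hcon j
              nlinarith
      rw [abs_mul, abs_of_pos (hMR (ν+1))] at h5
      have := hMR (ν+1)
      nlinarith
    have := hζpos ν
    linarith
  -- linear independence of consecutive vectors
  have hind : ∀ ν (α β : ℝ), α • Z ν + β • Z (ν+1) = 0 → α = 0 ∧ β = 0 := by
    intro ν α β h
    have h0 : α * (M ν:ℝ) + β * (M (ν+1):ℝ) = 0 := by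
      have := congrFun h 0
      simpa [hZdef] using this
    have hcoord : ∀ j : Fin 3, α * r ν j + β * r (ν+1) j = 0 := by
      intro j
      have hyj : α * (y ν j:ℝ) + β * (y (ν+1) j:ℝ) = 0 := by
        fin_cases j
        · simpa [hZdef] using congrFun h 1
        · simpa [hZdef] using congrFun h 2
        · simpa [hZdef] using congrFun h 3
      simp only [hr]
      linear_combination θ j * h0 + hyj
    rcases eq_or_ne β 0 with hβ | hβ
    · subst hβ
      have : α * (M ν:ℝ) = 0 := by linarith
      exact ⟨by
        rcases mul_eq_zero.mp this with h' | h'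
        · exact h'
        · exact absurd h' (hMR ν).ne', rfl⟩
    · exfalso
      obtain ⟨j₀, hj₀⟩ := hζmax ν
      have e1 : |α| * (M ν:ℝ) = |β| * (M (ν+1):ℝ) := by
        have hm : α * (M ν:ℝ) = -(β * (M (ν+1):ℝ)) := by linarith
        calc |α| * (M ν:ℝ) = |α * (M ν:ℝ)| := by
              rw [abs_mul, abs_of_pos (hMR ν)]
          _ = |β * (M (ν+1):ℝ)| := by rw [hm, abs_neg]
          _ = |β| * (M (ν+1):ℝ) := by rw [abs_mul, abs_of_pos (hMR (ν+1))]
      have e2 : |α| * ζ ν = |β| * |r (ν+1) j₀| := by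
        have hm : α * r ν j₀ = -(β * r (ν+1) j₀) := by linarith [hcoord j₀]
        calc |α| * ζ ν = |α| * |r ν j₀| := by rw [hj₀]
          _ = |α * r ν j₀| := (abs_mul _ _).symm
          _ = |β * r (ν+1) j₀| := by rw [hm, abs_neg]
          _ = |β| * |r (ν+1) j₀| := abs_mul _ _
      have hβpos : 0 < |β| := abs_pos.mpr hβ
      have hle : |β| ≤ |α| := by nlinarith [hMR ν, hMRlt ν, abs_nonneg α]
      have h6 : |r (ν+1) j₀| ≤ ζ (ν+1) := hrle _ _
      nlinarith [hζstep ν, hζpos ν, abs_nonneg α, hζpos (ν+1)]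
  -- integrality of coefficients
  have hint : ∀ ν (α β : ℝ) (w : Fin 4 → ℤ),
      (∀ i, ((w i : ℝ)) = (α • Z ν + β • Z (ν+1)) i) →
      (∃ m : ℤ, α = m) ∧ (∃ n : ℤ, β = n) := by
    intro ν α β w hw
    have ha' : |α - (round α : ℤ)| ≤ 1/2 := abs_sub_round α
    have hb' : |β - (round β : ℤ)| ≤ 1/2 := abs_sub_round β
    set a' : ℝ := α - (round α : ℤ) with ha'def
    set b' : ℝ := β - (round β : ℤ) with hb'def
    have hw0 : ((w 0 : ℝ)) = α * (M ν:ℝ) + β * (M (ν+1):ℝ) := by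
      have := hw 0; simpa [hZdef] using this
    have hwj : ∀ j : Fin 3, ((w j.succ : ℝ)) = α * (y ν j:ℝ) + β * (y (ν+1) j:ℝ) := by
      intro j
      fin_cases j
      · have := hw 1; simpa [hZdef] using this
      · have := hw 2; simpa [hZdef] using this
      · have := hw 3; simpa [hZdef] using this
    obtain ⟨x, hx⟩ : ∃ x : ℤ, (x:ℝ) = a' * (M ν:ℝ) + b' * (M (ν+1):ℝ) :=
      ⟨w 0 - round α * M ν - round β * M (ν+1), by
        push_cast
        rw [hw0, ha'def, hb'def]; ring⟩
    obtain ⟨q, hq2⟩ : ∃ q : Fin 3 → ℤ, ∀ j, ((q j : ℝ)) = a' * (y ν j:ℝ) + b' * (y (ν+1) j:ℝ) :=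
      ⟨fun j => w j.succ - round α * y ν j - round β * y (ν+1) j, fun j => by
        push_cast
        rw [hwj j, ha'def, hb'def]; ring⟩
    have hq : ∀ j, θ j * (x:ℝ) + (q j:ℝ) = a' * r ν j + b' * r (ν+1) j := by
      intro j
      rw [hq2 j, hx]; simp only [hr]; ring
    have hqbnd : ∀ j, |a' * r ν j + b' * r (ν+1) j| < ζ ν := by
      intro j
      have h1 : |a' * r ν j| ≤ (1/2) * ζ ν := by
        rw [abs_mul]
        have := hrle ν j
        nlinarith [abs_nonneg a', abs_nonneg (r ν j), hζ0 ν]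
      have h2 : |b' * r (ν+1) j| ≤ (1/2) * ζ (ν+1) := by
        rw [abs_mul]
        have := hrle (ν+1) j
        nlinarith [abs_nonneg b', abs_nonneg (r (ν+1) j), hζ0 (ν+1)]
      calc |a' * r ν j + b' * r (ν+1) j| ≤ |a' * r ν j| + |b' * r (ν+1) j| := abs_add_le _ _
        _ < ζ ν := by linarith [hζstep ν, h1, h2]
    have hxzero : x = 0 := by
      by_contra hx0
      have hxRlt : |(x:ℝ)| < (M (ν+1):ℝ) := by
        have h1 : |(x:ℝ)| ≤ (1/2) * (M ν:ℝ) + (1/2) * (M (ν+1):ℝ) := by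
          rw [hx]
          calc |a' * (M ν:ℝ) + b' * (M (ν+1):ℝ)| ≤ |a' * (M ν:ℝ)| + |b' * (M (ν+1):ℝ)| :=
                abs_add_le _ _
            _ ≤ (1/2) * (M ν:ℝ) + (1/2) * (M (ν+1):ℝ) := by
                rw [abs_mul, abs_mul, abs_of_pos (hMR ν), abs_of_pos (hMR (ν+1))]
                have := hMR ν; have := hMR (ν+1)
                nlinarith [abs_nonneg a', abs_nonneg b']
        linarith [hMRlt ν]
      have hxlt : |x| < M (ν+1) := by
        have : |(x:ℝ)| = ((|x| : ℤ) : ℝ) := by push_cast; rfl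
        rw [this] at hxRlt
        exact_mod_cast hxRlt
      obtain ⟨j, hj⟩ := hbest' ν x q hx0 hxlt
      rw [hq j] at hj
      exact absurd hj (not_le.mpr (hqbnd j))
    have hqzero : ∀ j, q j = 0 := by
      intro j
      have h1 : |(q j : ℝ)| < 1 := by
        have h2 := hqbnd j
        have h3 : θ j * (x:ℝ) + (q j:ℝ) = (q j:ℝ) := by
          rw [hxzero]; push_cast; ring
        rw [← h3, hq j]
        calc |a' * r ν j + b' * r (ν+1) j| < ζ ν := h2
          _ < 1 := by linarith [hζhalf ν]
      have h4 : ((|q j| : ℤ):ℝ) < 1 := by rw [Int.cast_abs]; exact h1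
      have h5 : |q j| < 1 := by exact_mod_cast h4
      have h6 := abs_lt.mp h5
      omega
    -- the reduced vector is zero
    have hvec : a' • Z ν + b' • Z (ν+1) = 0 := by
      funext i
      simp only [Pi.add_apply, Pi.smul_apply, smul_eq_mul, Pi.zero_apply]
      fin_cases i
      · have : (x:ℝ) = 0 := by rw [hxzero]; simp
        rw [hx] at this
        simpa [hZdef] using this
      · have : ((q 0 : ℤ):ℝ) = 0 := by rw [hqzero 0]; simp
        rw [hq2 0] at this
        simpa [hZdef] using this
      · have : ((q 1 : ℤ):ℝ) = 0 := by rw [hqzero 1]; simp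
        rw [hq2 1] at this
        simpa [hZdef] using this
      · have : ((q 2 : ℤ):ℝ) = 0 := by rw [hqzero 2]; simp
        rw [hq2 2] at this
        simpa [hZdef] using this
    obtain ⟨hA, hB⟩ := hind ν a' b' hvec
    refine ⟨⟨round α, by rw [ha'def] at hA; linarith⟩, ⟨round β, by rw [hb'def] at hB; linarith⟩⟩
  -- consecutive vectors are linearly independent (mathlib form)
  have hli2 : ∀ ν, LinearIndependent ℝ ![Z ν, Z (ν+1)] := by
    intro ν
    rw [LinearIndependent.pair_iff]
    intro s t hst
    exact hind ν s t hst
  have hspan : ∀ ν (π : Submodule ℝ (Fin 4 → ℝ)), Module.finrank ℝ π = 2 →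
      Z ν ∈ π → Z (ν+1) ∈ π →
      Submodule.span ℝ ({Z ν, Z (ν+1)} : Set (Fin 4 → ℝ)) = π := by
    intro ν π hπ h1 h2
    have hle : Submodule.span ℝ ({Z ν, Z (ν+1)} : Set (Fin 4 → ℝ)) ≤ π := by
      rw [Submodule.span_le]
      rintro v (rfl | rfl) <;> assumption
    have hrange : Set.range ![Z ν, Z (ν+1)] = {Z ν, Z (ν+1)} := by
      simp [Matrix.range_cons, Matrix.range_empty, Set.pair_comm]
    have hfr : Module.finrank ℝ
        (Submodule.span ℝ ({Z ν, Z (ν+1)} : Set (Fin 4 → ℝ))) = 2 := by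
      rw [← hrange, finrank_span_eq_card (hli2 ν)]
      simp
    exact Submodule.eq_of_le_of_finrank_le hle (by rw [hπ, hfr])
  -- the invariance step
  have hF3 : ∀ ν (π : Submodule ℝ (Fin 4 → ℝ)), Module.finrank ℝ π = 2 →
      Z ν ∈ π → Z (ν+1) ∈ π → Z (ν+2) ∈ π → ∀ j, |S (ν+1) j| = |S ν j| := by
    intro ν π hπ h0 h1 h2
    have hsp1 := hspan ν π hπ h0 h1
    have hsp2 := hspan (ν+1) π hπ h1 h2
    have hmem1 : Z (ν+2) ∈ Submodule.span ℝ ({Z ν, Z (ν+1)} : Set (Fin 4 → ℝ)) := by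
      rw [hsp1]; exact h2
    obtain ⟨α, β, hαβ⟩ := Submodule.mem_span_pair.mp hmem1
    have hmem2 : Z ν ∈ Submodule.span ℝ ({Z (ν+1), Z (ν+2)} : Set (Fin 4 → ℝ)) := by
      rw [hsp2]; exact h0
    obtain ⟨α', β', hα'β'⟩ := Submodule.mem_span_pair.mp hmem2
    obtain ⟨⟨m, hm⟩, -⟩ := hint ν α β ![M (ν+2), y (ν+2) 0, y (ν+2) 1, y (ν+2) 2] (by
      intro i
      rw [hαβ]
      fin_cases i <;> simp [hZdef])
    obtain ⟨-, ⟨n', hn'⟩⟩ := hint (ν+1) α' β' ![M ν, y ν 0, y ν 1, y ν 2] (by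
      intro i
      rw [hα'β']
      fin_cases i <;> simp [hZdef])
    have hzero : (β'*α - 1) • Z ν + (α' + β'*β) • Z (ν+1) = 0 := by
      funext i
      have h5 := congrFun hαβ i
      have h6 := congrFun hα'β' i
      simp only [Pi.add_apply, Pi.smul_apply, smul_eq_mul, Pi.zero_apply] at h5 h6 ⊢
      linear_combination β' * h5 + h6
    have hba : β' * α = 1 := by
      have := (hind ν _ _ hzero).1
      linarith
    have hm1 : m = 1 ∨ m = -1 := by
      have : m * n' = 1 := by
        have : ((m : ℝ)) * ((n' : ℝ)) = 1 := by rw [← hm, ← hn']; linarith [hba]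
        exact_mod_cast this
      exact Int.eq_one_or_neg_one_of_mul_eq_one this
    have hc0 : α * (M ν:ℝ) + β * (M (ν+1):ℝ) = (M (ν+2):ℝ) := by
      simpa [hZdef] using congrFun hαβ 0
    have hcj : ∀ j : Fin 3, α * (y ν j:ℝ) + β * (y (ν+1) j:ℝ) = (y (ν+2) j:ℝ) := by
      intro j
      fin_cases j
      · simpa [hZdef] using congrFun hαβ 1
      · simpa [hZdef] using congrFun hαβ 2
      · simpa [hZdef] using congrFun hαβ 3
    intro j
    have hSrel : S (ν+1) j = -α * S ν j := by
      simp only [hS]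
      linear_combination (-(M (ν+1):ℝ)) * (hcj j) + (y (ν+1) j:ℝ) * hc0
    have hαval : α = 1 ∨ α = -1 := by
      rcases hm1 with h | h
      · left; rw [hm, h]; norm_num
      · right; rw [hm, h]; norm_num
    rcases hαval with h | h <;> rw [hSrel, h] <;> simp
  -- assemble
  refine ⟨1/8, 8, by norm_num, by norm_num, ?_⟩
  intro a b π hab hπ hmem ν₁ ν₂ h1 h2 h3 h4
  have hmemZ : ∀ ν, a ≤ ν → ν ≤ b → Z ν ∈ π := by
    intro ν hν hν'
    have := hmem ν hν hν'
    simpa [hZdef] using this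
  have hrun : ∀ k, a + k + 1 ≤ b → ∀ j, |S (a + k) j| = |S a j| := by
    intro k
    induction k with
    | zero => intro _ j; rfl
    | succ n ih =>
      intro hb j
      have e1 : |S (a + n + 1) j| = |S (a + n) j| :=
        hF3 (a+n) π hπ (hmemZ _ (by omega) (by omega))
          (hmemZ _ (by omega) (by omega)) (hmemZ _ (by omega) (by omega)) j
      have e2 : a + (n+1) = (a + n) + 1 := by omega
      rw [e2, e1, ih (by omega) j]
  have hSeq : ∀ j, |S ν₁ j| = |S ν₂ j| := by
    intro j
    obtain ⟨k₁, rfl⟩ := Nat.exists_eq_add_of_le h1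
    obtain ⟨k₂, hk₂⟩ := Nat.exists_eq_add_of_le h3
    rw [hrun k₁ (by omega) j]
    rw [hk₂, hrun k₂ (by omega) j]
  constructor
  · obtain ⟨j, hj⟩ := hF1 ν₂
    have h5 := hF2 ν₁ j
    have heq := hSeq j
    rw [← heq] at hj
    linarith
  · obtain ⟨j, hj⟩ := hF1 ν₁
    have h5 := hF2 ν₂ j
    have heq := hSeq j
    rw [heq] at hj
    linarith
end

section
/- (Lemma 2) Let θ¹, θ², θ³ be real numbers such that 1, θ¹, θ², θ³ are linearly independent over ℚ. Then there exist constants C ≥ c > 0, depending only on (θ¹, θ², θ³), with the following property. Whenever a ≤ b are indices such that all the vectors z_ν, for a ≤ ν ≤ b, lie in a common two-dimensional linear subspace π of ℝ⁴, one has c·ζ_{ν₂}·M_{ν₂+1} ≤ ζ_{ν₁}·M_{ν₁+1} ≤ C·ζ_{ν₂}·M_{ν₂+1} for all ν₁, ν₂ with a ≤ ν₁, ν₂ ≤ b − 1. -/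
def Lf (θ : Fin 3 → ℝ) (w : Fin 3 → ℤ) : ℝ := ∑ i : Fin 3, θ i * (w i : ℝ)

lemma cast_natAbs_real (n : ℤ) : ((n.natAbs : ℝ)) = |(n : ℝ)| := by
  rw [Nat.cast_natAbs, Int.cast_abs]

lemma nid_le_abs_add_int_s19 (t : ℝ) (k : ℤ) : nid t ≤ |t + k| := by
  rw [nid, abs_sub_round_eq_min]
  have h0 : 0 ≤ Int.fract t := Int.fract_nonneg t
  have h1 : Int.fract t < 1 := Int.fract_lt_one t
  have ht : t = (⌊t⌋ : ℝ) + Int.fract t := (Int.floor_add_fract t).symm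
  rcases le_or_gt 0 (⌊t⌋ + k) with hd | hd
  · have hd' : (0:ℝ) ≤ ((⌊t⌋ + k : ℤ) : ℝ) := by exact_mod_cast hd
    push_cast at hd'
    have : t + k = ((⌊t⌋:ℝ) + k) + Int.fract t := by linarith [ht]
    rw [this, abs_of_nonneg (by linarith)]
    exact le_trans (min_le_left _ _) (by linarith)
  · have hd0 : ⌊t⌋ + k ≤ -1 := by omega
    have hd' : ((⌊t⌋ + k : ℤ) : ℝ) ≤ -1 := by exact_mod_cast hd0
    push_cast at hd'
    have heq : t + k = ((⌊t⌋:ℝ) + k) + Int.fract t := by linarith [ht]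
    have hneg : t + k < 0 := by linarith
    rw [abs_of_neg hneg]
    exact le_trans (min_le_right _ _) (by linarith)

lemma heightM_le_real (w : Fin 3 → ℤ) (i : Fin 3) : |(w i : ℝ)| ≤ (heightM w : ℝ) := by
  have h : (w i).natAbs ≤ heightM w :=
    Finset.le_sup (f := fun i => (w i).natAbs) (Finset.mem_univ i)
  rw [← cast_natAbs_real]; exact_mod_cast h

lemma heightM_lt_of (w : Fin 3 → ℤ) (N : ℕ) (hN : 0 < N) (h : ∀ i, |(w i : ℝ)| < (N : ℝ)) :
    heightM w < N := by
  refine Finset.sup_lt_iff (by simpa using hN) |>.2 fun i _ => ?_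
  have : ((w i).natAbs : ℝ) < (N : ℝ) := by rw [cast_natAbs_real]; exact h i
  exact_mod_cast this

lemma heightM_pos (w : Fin 3 → ℤ) (h : w ≠ 0) : 0 < heightM w := by
  obtain ⟨i, hi⟩ := Function.ne_iff.mp h
  have h1 : 0 < (w i).natAbs := Int.natAbs_pos.mpr hi
  exact lt_of_lt_of_le h1 (Finset.le_sup (f := fun i => (w i).natAbs) (Finset.mem_univ i))

lemma heightM_attained (w : Fin 3 → ℤ) : ∃ i, (heightM w : ℝ) = |(w i : ℝ)| := by
  obtain ⟨i, _, hi⟩ := Finset.exists_mem_eq_sup Finset.univ ⟨0, Finset.mem_univ 0⟩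
    (fun i => (w i).natAbs)
  have h2 : heightM w = (w i).natAbs := hi
  refine ⟨i, ?_⟩
  rw [← cast_natAbs_real]
  exact_mod_cast h2

lemma nid_pos (θ : Fin 3 → ℝ) (hli : LinearIndependent ℚ ![(1 : ℝ), θ 0, θ 1, θ 2])
    (w : Fin 3 → ℤ) (hw : w ≠ 0) : 0 < nid (Lf θ w) := by
  rcases lt_or_eq_of_le (abs_nonneg (Lf θ w - round (Lf θ w))) with h | h
  · exact h
  · exfalso
    obtain ⟨R, hR⟩ : ∃ R : ℤ, Lf θ w = (R : ℝ) := by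
      refine ⟨round (Lf θ w), ?_⟩
      have := h.symm
      rw [abs_eq_zero, sub_eq_zero] at this
      exact this
    set g : Fin 4 → ℚ := ![(-R : ℤ), (w 0 : ℚ), (w 1 : ℚ), (w 2 : ℚ)] with hg
    have hsum : ∑ i : Fin 4, g i • (![(1 : ℝ), θ 0, θ 1, θ 2]) i = 0 := by
      rw [Fin.sum_univ_four]
      simp only [hg, Matrix.cons_val_zero, Matrix.cons_val_one, Matrix.head_cons,
        Matrix.cons_val_two, Matrix.tail_cons, Matrix.cons_val_three, Rat.smul_def]
      push_cast
      have hL : Lf θ w = θ 0 * w 0 + θ 1 * w 1 + θ 2 * w 2 := by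
        rw [Lf, Fin.sum_univ_three]
      rw [hL] at hR
      linarith [hR]
    have hz := Fintype.linearIndependent_iff.mp hli g hsum
    apply hw
    funext i
    fin_cases i
    · have := hz 1; simp [hg] at this; exact_mod_cast this
    · have := hz 2; simp [hg] at this; exact_mod_cast this
    · have := hz 3; simp [hg] at this; exact_mod_cast this

def Dlt (θ : Fin 3 → ℝ) (x : ℕ → Fin 3 → ℤ) (y : ℕ → ℤ) (ν : ℕ) (i : Fin 3) : ℝ :=
  (Lf θ (x ν) + (y ν : ℝ)) * (x (ν + 1) i : ℝ)
    - (Lf θ (x (ν + 1)) + (y (ν + 1) : ℝ)) * (x ν i : ℝ)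

lemma Lf_comb (θ : Fin 3 → ℝ) (w u v : Fin 3 → ℤ) (s t : ℝ)
    (h : ∀ i, (w i : ℝ) = s * (u i : ℝ) + t * (v i : ℝ)) :
    Lf θ w = s * Lf θ u + t * Lf θ v := by
  rw [Lf, Lf, Lf, Finset.mul_sum, Finset.mul_sum, ← Finset.sum_add_distrib]
  exact Finset.sum_congr rfl fun i _ => by rw [h i]; ring

set_option maxHeartbeats 1000000

/-- **Lemma 2.** Let `1, θ¹, θ², θ³` be linearly independent over `ℚ`, and let
`x_1, x_2, …` be the sequence of best approximations for the linear form
`L(x) = θ¹x₁ + θ²x₂ + θ³x₃`, with heights `M_ν = M(x_ν)` strictly increasing, values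
`ζ_ν = ‖L(x_ν)‖` strictly decreasing, and `z_ν = (x_{1,ν}, x_{2,ν}, x_{3,ν}, y_ν) ∈ ℤ⁴`
the associated integer vectors. There are constants `C ≥ c > 0`, depending only on `θ`,
such that whenever all the vectors `z_ν` with `a ≤ ν ≤ b` lie in a common two-dimensional
linear subspace `π ⊆ ℝ⁴`, one has `ζ_{ν₁} M_{ν₁+1} ≍ ζ_{ν₂} M_{ν₂+1}` for all
`a ≤ ν₁, ν₂ ≤ b − 1`. -/
theorem lemma2_best_approx_in_plane (θ : Fin 3 → ℝ)
    (hli : LinearIndependent ℚ ![(1 : ℝ), θ 0, θ 1, θ 2])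
    (x : ℕ → Fin 3 → ℤ) (y : ℕ → ℤ) (ζ : ℕ → ℝ)
    (hx0 : ∀ ν, x ν ≠ 0)
    (hMmono : StrictMono fun ν => heightM (x ν))
    (hζ : ∀ ν, ζ ν = nid (∑ i : Fin 3, θ i * (x ν i : ℝ)))
    (hζanti : StrictAnti ζ)
    (hbest : ∀ (ν : ℕ) (w : Fin 3 → ℤ), w ≠ 0 → heightM w < heightM (x (ν + 1)) →
      ζ ν ≤ nid (∑ i : Fin 3, θ i * (w i : ℝ)))
    (hy : ∀ ν, nid (∑ i : Fin 3, θ i * (x ν i : ℝ)) =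
      |(∑ i : Fin 3, θ i * (x ν i : ℝ)) + (y ν : ℝ)|) :
    ∃ c C : ℝ, 0 < c ∧ c ≤ C ∧
      ∀ (a b : ℕ) (π : Submodule ℝ (Fin 4 → ℝ)), a ≤ b → Module.finrank ℝ π = 2 →
        (∀ ν, a ≤ ν → ν ≤ b →
          (![(x ν 0 : ℝ), (x ν 1 : ℝ), (x ν 2 : ℝ), (y ν : ℝ)] : Fin 4 → ℝ) ∈ π) →
        ∀ ν₁ ν₂ : ℕ, a ≤ ν₁ → ν₁ + 1 ≤ b → a ≤ ν₂ → ν₂ + 1 ≤ b →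
          c * (ζ ν₂ * (heightM (x (ν₂ + 1)) : ℝ)) ≤ ζ ν₁ * (heightM (x (ν₁ + 1)) : ℝ) ∧
            ζ ν₁ * (heightM (x (ν₁ + 1)) : ℝ) ≤
              C * (ζ ν₂ * (heightM (x (ν₂ + 1)) : ℝ)) := by
  -- basic facts
  have hζpos : ∀ ν, 0 < ζ ν := fun ν => by
    rw [hζ ν]; exact nid_pos θ hli (x ν) (hx0 ν)
  have hζhalf : ∀ ν, ζ ν ≤ 1 / 2 := fun ν => by
    rw [hζ ν]; exact abs_sub_round _
  have hη : ∀ ν, |Lf θ (x ν) + (y ν : ℝ)| = ζ ν := fun ν => ((hζ ν).trans (hy ν)).symm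
  have hζsucc : ∀ ν, ζ (ν + 1) < ζ ν := fun ν => hζanti (lt_add_one ν)
  have hMlt : ∀ ν, heightM (x ν) < heightM (x (ν + 1)) := fun ν => hMmono (lt_add_one ν)
  have hM1 : ∀ ν, 0 < heightM (x ν) := fun ν => heightM_pos (x ν) (hx0 ν)
  have hMr1 : ∀ ν, (1 : ℝ) ≤ (heightM (x ν) : ℝ) := fun ν => by exact_mod_cast hM1 ν
  have hMrlt : ∀ ν, (heightM (x ν) : ℝ) < (heightM (x (ν + 1)) : ℝ) := fun ν => by
    exact_mod_cast hMlt ν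
  -- no small nonzero integer vector
  have ksp : ∀ (ν : ℕ) (w : Fin 3 → ℤ) (k : ℤ), heightM w < heightM (x (ν + 1)) →
      |Lf θ w + (k : ℝ)| < ζ ν → (∀ i, w i = 0) ∧ k = 0 := by
    intro ν w k hh habs
    by_cases hw : w = 0
    · subst hw
      have hL0 : Lf θ (0 : Fin 3 → ℤ) = 0 := by simp [Lf]
      rw [hL0, zero_add] at habs
      have : |(k : ℝ)| < 1 := lt_of_lt_of_le habs (le_trans (hζhalf ν) (by norm_num))
      have hk : k = 0 := by
        have h2 : |k| < 1 := by exact_mod_cast (by rwa [← Int.cast_abs] at this : ((|k| : ℤ) : ℝ) < 1)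
        have := abs_lt.mp h2
        omega
      exact ⟨fun i => rfl, hk⟩
    · exfalso
      have h1 : ζ ν ≤ nid (Lf θ w) := hbest ν w hw hh
      have h2 : nid (Lf θ w) ≤ |Lf θ w + k| := nid_le_abs_add_int_s19 _ k
      linarith
  -- consecutive vectors are not proportional
  have indep : ∀ (p : ℕ) (c₀ c₁ : ℝ),
      (∀ i : Fin 3, c₀ * (x p i : ℝ) + c₁ * (x (p + 1) i : ℝ) = 0) →
      c₀ * (y p : ℝ) + c₁ * (y (p + 1) : ℝ) = 0 → c₀ = 0 ∧ c₁ = 0 := by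
    intro p c₀ c₁ hxeq hyeq
    by_cases h0 : c₀ = 0
    · subst h0
      refine ⟨rfl, ?_⟩
      obtain ⟨i, hi⟩ := Function.ne_iff.mp (hx0 (p + 1))
      have := hxeq i
      rw [zero_mul, zero_add] at this
      rcases mul_eq_zero.mp this with h | h
      · exact h
      · exact absurd (by exact_mod_cast h) hi
    · exfalso
      set t : ℝ := -c₁ / c₀ with ht
      have hxt : ∀ i : Fin 3, (x p i : ℝ) = t * (x (p + 1) i : ℝ) := by
        intro i
        have := hxeq i
        rw [ht, div_mul_eq_mul_div, eq_div_iff h0]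
        linarith [this]
      have hyt : (y p : ℝ) = t * (y (p + 1) : ℝ) := by
        rw [ht, div_mul_eq_mul_div, eq_div_iff h0]; linarith [hyeq]
      have hLt : Lf θ (x p) = t * Lf θ (x (p + 1)) := by
        have := Lf_comb θ (x p) (x (p + 1)) (x (p + 1)) t 0 (fun i => by rw [hxt i]; ring)
        rw [this]; ring
      have hζt : ζ p = |t| * ζ (p + 1) := by
        rw [← hη p, ← hη (p + 1), hLt, hyt, ← abs_mul]
        ring_nf
      have htgt : 1 < |t| := by
        have h1 : ζ (p + 1) < ζ p := hζsucc p
        have h2 : 0 < ζ (p + 1) := hζpos (p + 1)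
        by_contra hle
        push_neg at hle
        nlinarith [hζt]
      obtain ⟨i, hi⟩ := heightM_attained (x (p + 1))
      have h3 : |(x p i : ℝ)| = |t| * (heightM (x (p + 1)) : ℝ) := by
        rw [hxt i, abs_mul, hi]
      have h4 : |(x p i : ℝ)| ≤ (heightM (x p) : ℝ) := heightM_le_real _ i
      have h5 := hMrlt p
      have h6 := hMr1 (p + 1)
      nlinarith
  -- rounding lemma: real coefficients over a consecutive pair are integers
  have roundlem : ∀ (p : ℕ) (v : Fin 3 → ℤ) (kv : ℤ) (α β : ℝ),
      (∀ i, (v i : ℝ) = α * (x p i : ℝ) + β * (x (p + 1) i : ℝ)) →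
      ((kv : ℝ) = α * (y p : ℝ) + β * (y (p + 1) : ℝ)) →
      α = (round α : ℝ) ∧ β = (round β : ℝ) := by
    intro p v kv α β hv hk
    set s : ℝ := α - round α with hs
    set t : ℝ := β - round β with htt
    have hsb : |s| ≤ 1 / 2 := abs_sub_round α
    have htb : |t| ≤ 1 / 2 := abs_sub_round β
    set w : Fin 3 → ℤ := fun i => v i - round α * x p i - round β * x (p + 1) i with hwdef
    set k : ℤ := kv - round α * y p - round β * y (p + 1) with hkdef
    have hwi : ∀ i, (w i : ℝ) = s * (x p i : ℝ) + t * (x (p + 1) i : ℝ) := by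
      intro i; rw [hwdef]; push_cast; rw [hv i]; ring
    have hki : (k : ℝ) = s * (y p : ℝ) + t * (y (p + 1) : ℝ) := by
      rw [hkdef]; push_cast; rw [hk]; ring
    have hLw : Lf θ w = s * Lf θ (x p) + t * Lf θ (x (p + 1)) := Lf_comb θ w _ _ s t hwi
    have habs : |Lf θ w + (k : ℝ)| < ζ p := by
      have e : Lf θ w + (k : ℝ)
          = s * (Lf θ (x p) + y p) + t * (Lf θ (x (p + 1)) + y (p + 1)) := by
        rw [hLw, hki]; ring
      have h1 : |Lf θ w + (k : ℝ)| ≤ |s| * ζ p + |t| * ζ (p + 1) := by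
        rw [e, ← hη p, ← hη (p + 1)]
        calc |s * (Lf θ (x p) + (y p : ℝ)) + t * (Lf θ (x (p + 1)) + (y (p + 1) : ℝ))|
            ≤ |s * (Lf θ (x p) + (y p : ℝ))| + |t * (Lf θ (x (p + 1)) + (y (p + 1) : ℝ))| :=
              abs_add_le _ _
          _ = |s| * |Lf θ (x p) + (y p : ℝ)| + |t| * |Lf θ (x (p + 1)) + (y (p + 1) : ℝ)| := by
              rw [abs_mul, abs_mul]
      nlinarith [hζsucc p, hζpos (p + 1), hζpos p, abs_nonneg s, abs_nonneg t]
    have hh : heightM w < heightM (x (p + 1)) := by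
      apply heightM_lt_of _ _ (hM1 (p + 1))
      intro i
      have h1 : |(w i : ℝ)| ≤ |s| * |(x p i : ℝ)| + |t| * |(x (p + 1) i : ℝ)| := by
        rw [hwi i]
        calc |s * (x p i : ℝ) + t * (x (p + 1) i : ℝ)|
            ≤ |s * (x p i : ℝ)| + |t * (x (p + 1) i : ℝ)| := abs_add_le _ _
          _ = |s| * |(x p i : ℝ)| + |t| * |(x (p + 1) i : ℝ)| := by rw [abs_mul, abs_mul]
      have hb1 : |s| * |(x p i : ℝ)| ≤ (1 / 2) * (heightM (x p) : ℝ) :=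
        mul_le_mul hsb (heightM_le_real _ i) (abs_nonneg _) (by norm_num)
      have hb2 : |t| * |(x (p + 1) i : ℝ)| ≤ (1 / 2) * (heightM (x (p + 1)) : ℝ) :=
        mul_le_mul htb (heightM_le_real _ i) (abs_nonneg _) (by norm_num)
      have := hMrlt p
      linarith
    obtain ⟨hw0, hk0⟩ := ksp p w k hh habs
    have hxeq : ∀ i : Fin 3, s * (x p i : ℝ) + t * (x (p + 1) i : ℝ) = 0 := by
      intro i
      have h2 := hwi i
      rw [hw0 i] at h2
      simpa using h2.symm
    have hyeq : s * (y p : ℝ) + t * (y (p + 1) : ℝ) = 0 := by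
      have h2 := hki
      rw [hk0] at h2
      simpa using h2.symm
    obtain ⟨hs0, ht0⟩ := indep p s t hxeq hyeq
    rw [hs] at hs0
    rw [htt] at ht0
    constructor <;> linarith
  -- lower bound for the invariant
  have lower : ∀ ν, ∃ i : Fin 3,
      ζ ν * (heightM (x (ν + 1)) : ℝ) ≤ 8 * |Dlt θ x y ν i| := by
    intro ν
    by_contra hcon
    push_neg at hcon
    simp only [Dlt] at hcon
    set η : ℝ := Lf θ (x ν) + (y ν : ℝ) with hηd
    set η' : ℝ := Lf θ (x (ν + 1)) + (y (ν + 1) : ℝ) with hηd'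
    have hηz : |η| = ζ ν := hη ν
    have hηz' : |η'| = ζ (ν + 1) := hη (ν + 1)
    have hηne : η ≠ 0 := by
      intro h; rw [h, abs_zero] at hηz; linarith [hζpos ν]
    set r : ℝ := η' / η with hr
    set s : ℤ := -round (2 * r) with hsdef
    have hβ : |(s : ℝ) + 2 * r| ≤ 1 / 2 := by
      have h2 : ((s : ℝ) + 2 * r) = 2 * r - (round (2 * r) : ℝ) := by
        rw [hsdef]; push_cast; ring
      rw [h2]; exact abs_sub_round _
    set w : Fin 3 → ℤ := fun i => s * x ν i + 2 * x (ν + 1) i with hwdef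
    set k : ℤ := s * y ν + 2 * y (ν + 1) with hkdef
    have hLwk : Lf θ w + (k : ℝ) = ((s : ℝ) + 2 * r) * η := by
      have hLw : Lf θ w = (s : ℝ) * Lf θ (x ν) + 2 * Lf θ (x (ν + 1)) :=
        Lf_comb θ w (x ν) (x (ν + 1)) (s : ℝ) 2 (fun i => by rw [hwdef]; push_cast; ring)
      have hη'r : η' = r * η := by rw [hr]; field_simp
      have e : Lf θ w + (k : ℝ) = (s : ℝ) * η + 2 * η' := by
        rw [hLw, hkdef, hηd, hηd']; push_cast; ring
      rw [e, hη'r]; ring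
    have habs : |Lf θ w + (k : ℝ)| < ζ ν := by
      rw [hLwk, abs_mul, hηz]
      nlinarith [hζpos ν, hβ, abs_nonneg ((s : ℝ) + 2 * r)]
    have hh : heightM w < heightM (x (ν + 1)) := by
      apply heightM_lt_of _ _ (hM1 (ν + 1))
      intro i
      have hcomp : (w i : ℝ)
          = ((s : ℝ) + 2 * r) * (x ν i : ℝ) + 2 * ((η * (x (ν + 1) i : ℝ) - η' * (x ν i : ℝ)) / η) := by
        rw [hwdef, hr]; push_cast; field_simp; ring
      have h1 : |(w i : ℝ)| ≤ |(s : ℝ) + 2 * r| * |(x ν i : ℝ)|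
          + 2 * (|η * (x (ν + 1) i : ℝ) - η' * (x ν i : ℝ)| / ζ ν) := by
        rw [hcomp]
        calc |((s : ℝ) + 2 * r) * (x ν i : ℝ) + 2 * ((η * (x (ν + 1) i : ℝ) - η' * (x ν i : ℝ)) / η)|
            ≤ |((s : ℝ) + 2 * r) * (x ν i : ℝ)|
              + |2 * ((η * (x (ν + 1) i : ℝ) - η' * (x ν i : ℝ)) / η)| := abs_add_le _ _
          _ = |(s : ℝ) + 2 * r| * |(x ν i : ℝ)|
              + 2 * (|η * (x (ν + 1) i : ℝ) - η' * (x ν i : ℝ)| / |η|) := by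
              rw [abs_mul, abs_mul, abs_div]; norm_num
          _ = |(s : ℝ) + 2 * r| * |(x ν i : ℝ)|
              + 2 * (|η * (x (ν + 1) i : ℝ) - η' * (x ν i : ℝ)| / ζ ν) := by rw [hηz]
      have hb1 : |(s : ℝ) + 2 * r| * |(x ν i : ℝ)| ≤ (1 / 2) * (heightM (x ν) : ℝ) :=
        mul_le_mul hβ (heightM_le_real _ i) (abs_nonneg _) (by norm_num)
      have hb2 : |η * (x (ν + 1) i : ℝ) - η' * (x ν i : ℝ)| / ζ ν
          < (heightM (x (ν + 1)) : ℝ) / 8 := by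
        rw [div_lt_div_iff₀ (hζpos ν) (by norm_num : (0:ℝ) < 8)]
        have := hcon i
        rw [hηd, hηd'] at *
        nlinarith [this]
      have := hMrlt ν
      have := hMr1 (ν + 1)
      linarith
    obtain ⟨hw0, hk0⟩ := ksp ν w k hh habs
    have hxeq : ∀ i : Fin 3, (s : ℝ) * (x ν i : ℝ) + 2 * (x (ν + 1) i : ℝ) = 0 := by
      intro i
      have h2 : ((w i : ℤ) : ℝ) = 0 := by rw [hw0 i]; norm_num
      rw [hwdef] at h2; push_cast at h2; linarith
    have hyeq : (s : ℝ) * (y ν : ℝ) + 2 * (y (ν + 1) : ℝ) = 0 := by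
      have h2 : ((k : ℤ) : ℝ) = 0 := by rw [hk0]; norm_num
      rw [hkdef] at h2; push_cast at h2; linarith
    obtain ⟨_, h2z⟩ := indep ν (s : ℝ) 2 hxeq hyeq
    norm_num at h2z
  -- upper bound for the invariant
  have upper : ∀ ν (i : Fin 3),
      |Dlt θ x y ν i| ≤ 2 * (ζ ν * (heightM (x (ν + 1)) : ℝ)) := by
    intro ν i
    simp only [Dlt]
    have h1 : |(Lf θ (x ν) + (y ν : ℝ)) * (x (ν + 1) i : ℝ)
        - (Lf θ (x (ν + 1)) + (y (ν + 1) : ℝ)) * (x ν i : ℝ)|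
        ≤ ζ ν * |(x (ν + 1) i : ℝ)| + ζ (ν + 1) * |(x ν i : ℝ)| := by
      calc |(Lf θ (x ν) + (y ν : ℝ)) * (x (ν + 1) i : ℝ)
          - (Lf θ (x (ν + 1)) + (y (ν + 1) : ℝ)) * (x ν i : ℝ)|
          ≤ |(Lf θ (x ν) + (y ν : ℝ)) * (x (ν + 1) i : ℝ)|
            + |(Lf θ (x (ν + 1)) + (y (ν + 1) : ℝ)) * (x ν i : ℝ)| := abs_sub _ _
        _ = ζ ν * |(x (ν + 1) i : ℝ)| + ζ (ν + 1) * |(x ν i : ℝ)| := by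
            rw [abs_mul, abs_mul, hη ν, hη (ν + 1)]
    have h2 := heightM_le_real (x (ν + 1)) i
    have h3 := heightM_le_real (x ν) i
    have h4 := hζsucc ν
    have h5 := hMrlt ν
    have h6 := hζpos (ν + 1)
    have h7 : (0:ℝ) ≤ (heightM (x ν) : ℝ) := Nat.cast_nonneg _
    nlinarith [abs_nonneg ((x ν i : ℝ)), abs_nonneg ((x (ν + 1) i : ℝ))]
  refine ⟨1 / 16, 16, by norm_num, by norm_num, ?_⟩
  intro a b π hab hrank hmem
  have step : ∀ ν, a ≤ ν → ν + 2 ≤ b → ∀ i, |Dlt θ x y (ν + 1) i| = |Dlt θ x y ν i| := by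
    intro ν hav hvb
    have hm0 : (![(x ν 0 : ℝ), (x ν 1 : ℝ), (x ν 2 : ℝ), (y ν : ℝ)] : Fin 4 → ℝ) ∈ π :=
      hmem ν hav (by omega)
    have hm1 : (![(x (ν+1) 0 : ℝ), (x (ν+1) 1 : ℝ), (x (ν+1) 2 : ℝ), (y (ν+1) : ℝ)] : Fin 4 → ℝ) ∈ π :=
      hmem (ν+1) (by omega) (by omega)
    have hm2 : (![(x (ν+2) 0 : ℝ), (x (ν+2) 1 : ℝ), (x (ν+2) 2 : ℝ), (y (ν+2) : ℝ)] : Fin 4 → ℝ) ∈ π :=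
      hmem (ν+2) (by omega) (by omega)
    have hnli : ¬ LinearIndependent ℝ
        (![(⟨_, hm0⟩ : π), (⟨_, hm1⟩ : π), (⟨_, hm2⟩ : π)]) := by
      intro h
      have hcard := h.fintype_card_le_finrank
      rw [hrank] at hcard
      norm_num [Fintype.card_fin] at hcard
    obtain ⟨g, hg, j, hj⟩ := Fintype.not_linearIndependent_iff.mp hnli
    rw [Fin.sum_univ_three] at hg
    have hco := congrArg (fun z : π => (z : Fin 4 → ℝ)) hg
    simp only [Matrix.cons_val_zero, Matrix.cons_val_one, Matrix.head_cons,
      Matrix.cons_val_two, Matrix.tail_cons, Submodule.coe_add, SetLike.val_smul,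
      ZeroMemClass.coe_zero] at hco
    have ex : ∀ i : Fin 3,
        g 0 * (x ν i : ℝ) + g 1 * (x (ν+1) i : ℝ) + g 2 * (x (ν+2) i : ℝ) = 0 := by
      intro i
      fin_cases i
      · have := congrFun hco 0; simpa using this
      · have := congrFun hco 1; simpa using this
      · have := congrFun hco 2; simpa using this
    have ey : g 0 * (y ν : ℝ) + g 1 * (y (ν+1) : ℝ) + g 2 * (y (ν+2) : ℝ) = 0 := by
      have := congrFun hco 3; simpa using this
    clear hg hnli hco hm0 hm1 hm2
    by_cases hg2 : g 2 = 0
    · exfalso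
      have hxeq : ∀ i : Fin 3, g 0 * (x ν i : ℝ) + g 1 * (x (ν+1) i : ℝ) = 0 := by
        intro i; have := ex i; rw [hg2] at this; linarith
      have hyeq : g 0 * (y ν : ℝ) + g 1 * (y (ν+1) : ℝ) = 0 := by
        rw [hg2] at ey; linarith
      obtain ⟨h0, h1⟩ := indep ν (g 0) (g 1) hxeq hyeq
      apply hj
      fin_cases j
      · exact h0
      · exact h1
      · exact hg2
    · set α : ℝ := -g 0 / g 2 with hαd
      set β : ℝ := -g 1 / g 2 with hβd
      have hv : ∀ i : Fin 3, (x (ν+2) i : ℝ) = α * (x ν i : ℝ) + β * (x (ν+1) i : ℝ) := by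
        intro i
        have h := ex i
        rw [hαd, hβd]
        field_simp
        linear_combination h
      have hvy : (y (ν+2) : ℝ) = α * (y ν : ℝ) + β * (y (ν+1) : ℝ) := by
        rw [hαd, hβd]
        field_simp
        linear_combination ey
      obtain ⟨hαint, hβint⟩ := roundlem ν (x (ν+2)) (y (ν+2)) α β hv hvy
      have hα0 : α ≠ 0 := by
        intro h0
        have hxeq : ∀ i : Fin 3, β * (x (ν+1) i : ℝ) + (-1) * (x (ν+2) i : ℝ) = 0 := by
          intro i; have := hv i; rw [h0] at this; linarith
        have hyeq : β * (y (ν+1) : ℝ) + (-1) * (y (ν+2) : ℝ) = 0 := by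
          rw [h0] at hvy; linarith
        obtain ⟨-, hm1'⟩ := indep (ν+1) β (-1) hxeq hyeq
        norm_num at hm1'
      have hv' : ∀ i : Fin 3,
          (x ν i : ℝ) = (-β/α) * (x (ν+1) i : ℝ) + (1/α) * (x (ν+2) i : ℝ) := by
        intro i
        have h := hv i
        rw [div_mul_eq_mul_div, div_mul_eq_mul_div, ← add_div, eq_div_iff hα0]
        linear_combination (-1) * h
      have hvy' : (y ν : ℝ) = (-β/α) * (y (ν+1) : ℝ) + (1/α) * (y (ν+2) : ℝ) := by
        rw [div_mul_eq_mul_div, div_mul_eq_mul_div, ← add_div, eq_div_iff hα0]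
        linear_combination (-1) * hvy
      obtain ⟨-, hninv⟩ := roundlem (ν+1) (x ν) (y ν) (-β/α) (1/α) hv' hvy'
      have hαabs : |α| = 1 := by
        have h1 : α * (1/α) = 1 := by field_simp
        have h2' : ((round α : ℤ) : ℝ) * ((round (1/α) : ℤ) : ℝ) = 1 := by
          rw [← hαint, ← hninv]; exact h1
        have h2 : round α * round (1/α) = 1 := by exact_mod_cast h2'
        have hu : IsUnit (round α) := IsUnit.of_mul_eq_one _ h2
        rcases Int.isUnit_iff.mp hu with h | h <;> rw [hαint, h] <;> norm_num
      have hηrel : Lf θ (x (ν+2)) + (y (ν+2) : ℝ)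
          = α * (Lf θ (x ν) + (y ν : ℝ)) + β * (Lf θ (x (ν+1)) + (y (ν+1) : ℝ)) := by
        rw [Lf_comb θ (x (ν+2)) (x ν) (x (ν+1)) α β hv, hvy]; ring
      intro i
      have e2 : ν + 1 + 1 = ν + 2 := rfl
      have hΔrel : Dlt θ x y (ν+1) i = -α * Dlt θ x y ν i := by
        simp only [Dlt, e2]
        linear_combination (Lf θ (x (ν+1)) + ((y (ν+1) : ℤ) : ℝ)) * hv i
          - ((x (ν+1) i : ℤ) : ℝ) * hηrel
      rw [hΔrel, abs_mul, abs_neg, hαabs, one_mul]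
  have inv : ∀ ν, a ≤ ν → ν + 1 ≤ b → ∀ i, |Dlt θ x y ν i| = |Dlt θ x y a i| := by
    intro ν hav
    induction ν, hav using Nat.le_induction with
    | base => intro _ i; rfl
    | succ ν hν ih =>
      intro hb i
      rw [step ν hν (by omega) i, ih (by omega) i]
  intro ν₁ ν₂ ha1 hb1 ha2 hb2
  have key : ∀ μ₁ μ₂, a ≤ μ₁ → μ₁ + 1 ≤ b → a ≤ μ₂ → μ₂ + 1 ≤ b →
      ζ μ₁ * (heightM (x (μ₁ + 1)) : ℝ) ≤ 16 * (ζ μ₂ * (heightM (x (μ₂ + 1)) : ℝ)) := by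
    intro μ₁ μ₂ k1 k2 k3 k4
    obtain ⟨i, hi⟩ := lower μ₁
    have e1 : |Dlt θ x y μ₁ i| = |Dlt θ x y μ₂ i| := by
      rw [inv μ₁ k1 k2 i, inv μ₂ k3 k4 i]
    rw [e1] at hi
    have h2 := upper μ₂ i
    linarith
  exact ⟨by linarith [key ν₂ ν₁ ha2 hb2 ha1 hb1], by linarith [key ν₁ ν₂ ha1 hb1 ha2 hb2]⟩
end
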